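/- arXiv:2604.09495 — 4 statements merged into one kernel-verified Lean document; each statement's English description precedes it below -/
import Mathlib

section
/- Performance Improvement Guarantee (Proposition 1): Fix a risk parameter λ > 0, a joint agent-state based policy π, a time t ∈ {1,…,T}, and an agent i ∈ {1,2}. Let π̄^i_t be any greedy update for agent i at time t, and let π' denote the joint policy obtained from π by replacing the stage-t decision rule π^i_t with π̄^i_t (all other rules unchanged). Then J^λ_{t:T}(π') ≥ J^λ_{t:T}(π). -/
open Finset
open scoped Classical

/-- A two-agent finite-horizon Dec-POMDP. -/
structure DecPOMDP (S Y1 Y2 A1 A2 Z1 Z2 : Type)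
    [Fintype S] [Fintype Y1] [Fintype Y2] [Fintype A1] [Fintype A2]
    [Fintype Z1] [Fintype Z2] where
  P : S → A1 × A2 → S × Y1 × Y2 → ℝ
  P_nonneg : ∀ s a x, 0 ≤ P s a x
  P_sum : ∀ s a, ∑ x, P s a x = 1
  r : S → A1 × A2 → ℝ
  init : S × Y1 × Y2 → ℝ
  init_nonneg : ∀ x, 0 ≤ init x
  init_sum : ∑ x, init x = 1
  phi1 : Z1 → ℝ
  phi1_nonneg : ∀ z, 0 ≤ phi1 z
  phi1_sum : ∑ z, phi1 z = 1
  phi2 : Z2 → ℝ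
  phi2_nonneg : ∀ z, 0 ≤ phi2 z
  phi2_sum : ∑ z, phi2 z = 1
  T : ℕ
  T_pos : 1 ≤ T

variable {S Y1 Y2 A1 A2 Z1 Z2 : Type}
  [Fintype S] [Fintype Y1] [Fintype Y2] [Fintype A1] [Fintype A2]
  [Fintype Z1] [Fintype Z2]
  [Nonempty S] [Nonempty Y1] [Nonempty Y2] [Nonempty A1] [Nonempty A2]
  [Nonempty Z1] [Nonempty Z2]

/-- A stage decision rule is a pmf on actions and next agent states for each
observation/agent-state pair. -/
def IsRule {Y Z A : Type} [Fintype A] [Fintype Z] (ρ : Y → Z → A × Z → ℝ) : Prop :=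
  (∀ y z x, 0 ≤ ρ y z x) ∧ ∀ y z, ∑ x, ρ y z x = 1

/-- An agent-state based policy: a stage rule for every (0-indexed) time. -/
def IsPolicy {Y Z A : Type} [Fintype A] [Fintype Z] (π : ℕ → Y → Z → A × Z → ℝ) : Prop :=
  ∀ t, IsRule (π t)

/-- The marginal distribution ζ^π_t on (s_t, y_t, z_{t-1}) (time is 0-indexed). -/
noncomputable def zetaM (M : DecPOMDP S Y1 Y2 A1 A2 Z1 Z2)
    (π1 : ℕ → Y1 → Z1 → A1 × Z1 → ℝ) (π2 : ℕ → Y2 → Z2 → A2 × Z2 → ℝ) :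
    ℕ → S → Y1 × Y2 → Z1 × Z2 → ℝ
  | 0 => fun s y zm => M.init (s, y.1, y.2) * M.phi1 zm.1 * M.phi2 zm.2
  | (t+1) => fun s y zm =>
      ∑ s' : S, ∑ y' : Y1 × Y2, ∑ a' : A1 × A2, ∑ zm' : Z1 × Z2,
        zetaM M π1 π2 t s' y' zm' *
        (π1 t y'.1 zm'.1 (a'.1, zm.1) * π2 t y'.2 zm'.2 (a'.2, zm.2)) *
        M.P s' a' (s, y.1, y.2)

/-- Auxiliary risk-seeking centralized Q-function, indexed by the number `m` of
remaining steps, so that the Q-function at (0-indexed) time `t` is `Qaux (T-1-t)`. -/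
noncomputable def Qaux (M : DecPOMDP S Y1 Y2 A1 A2 Z1 Z2)
    (π1 : ℕ → Y1 → Z1 → A1 × Z1 → ℝ) (π2 : ℕ → Y2 → Z2 → A2 × Z2 → ℝ) (lam : ℝ) :
    ℕ → S → Y1 × Y2 → Z1 × Z2 → A1 × A2 → Z1 × Z2 → ℝ
  | 0 => fun s _ _ a _ => M.r s a
  | (m+1) => fun s _ _ a z => M.r s a + (1/lam) * Real.log
      (∑ sp : S, ∑ yp : Y1 × Y2, ∑ ap : A1 × A2, ∑ zp : Z1 × Z2,
        M.P s a (sp, yp.1, yp.2) *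
        (π1 (M.T - 1 - m) yp.1 z.1 (ap.1, zp.1) * π2 (M.T - 1 - m) yp.2 z.2 (ap.2, zp.2)) *
        Real.exp (lam * Qaux M π1 π2 lam m sp yp z ap zp))

/-- The risk-seeking centralized Q-function at (0-indexed) time `t`. -/
noncomputable def Qfun (M : DecPOMDP S Y1 Y2 A1 A2 Z1 Z2)
    (π1 : ℕ → Y1 → Z1 → A1 × Z1 → ℝ) (π2 : ℕ → Y2 → Z2 → A2 × Z2 → ℝ) (lam : ℝ) (t : ℕ) :
    S → Y1 × Y2 → Z1 × Z2 → A1 × A2 → Z1 × Z2 → ℝ :=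
  Qaux M π1 π2 lam (M.T - 1 - t)

/-- Risk-seeking performance J^λ_{t:T}(π) (time is 0-indexed). -/
noncomputable def Jrisk (M : DecPOMDP S Y1 Y2 A1 A2 Z1 Z2)
    (π1 : ℕ → Y1 → Z1 → A1 × Z1 → ℝ) (π2 : ℕ → Y2 → Z2 → A2 × Z2 → ℝ)
    (lam : ℝ) (t : ℕ) : ℝ :=
  (1/lam) * Real.log
    (∑ s : S, ∑ y : Y1 × Y2, ∑ zm : Z1 × Z2, ∑ a : A1 × A2, ∑ z : Z1 × Z2,
      zetaM M π1 π2 t s y zm *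
      (π1 t y.1 zm.1 (a.1, z.1) * π2 t y.2 zm.2 (a.2, z.2)) *
      Real.exp (lam * Qfun M π1 π2 lam t s y zm a z))

/-- Marginal of ζ^π_t on agent 1's (observation, previous agent state). -/
noncomputable def marg1 (M : DecPOMDP S Y1 Y2 A1 A2 Z1 Z2)
    (π1 : ℕ → Y1 → Z1 → A1 × Z1 → ℝ) (π2 : ℕ → Y2 → Z2 → A2 × Z2 → ℝ)
    (t : ℕ) (y1 : Y1) (z1m : Z1) : ℝ :=
  ∑ s : S, ∑ y2 : Y2, ∑ z2m : Z2, zetaM M π1 π2 t s (y1, y2) (z1m, z2m)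

/-- Marginal of ζ^π_t on agent 2's (observation, previous agent state). -/
noncomputable def marg2 (M : DecPOMDP S Y1 Y2 A1 A2 Z1 Z2)
    (π1 : ℕ → Y1 → Z1 → A1 × Z1 → ℝ) (π2 : ℕ → Y2 → Z2 → A2 × Z2 → ℝ)
    (t : ℕ) (y2 : Y2) (z2m : Z2) : ℝ :=
  ∑ s : S, ∑ y1 : Y1, ∑ z1m : Z1, zetaM M π1 π2 t s (y1, y2) (z1m, z2m)

/-- Averaged local Q-function for agent 1 at time t. -/
noncomputable def Qbar1 (M : DecPOMDP S Y1 Y2 A1 A2 Z1 Z2)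
    (π1 : ℕ → Y1 → Z1 → A1 × Z1 → ℝ) (π2 : ℕ → Y2 → Z2 → A2 × Z2 → ℝ)
    (lam : ℝ) (t : ℕ) (y1 : Y1) (z1m : Z1) (a1 : A1) (z1 : Z1) : ℝ :=
  (1/lam) * Real.log
    (∑ s : S, ∑ y2 : Y2, ∑ z2m : Z2, ∑ a2 : A2, ∑ z2 : Z2,
      (zetaM M π1 π2 t s (y1, y2) (z1m, z2m) / marg1 M π1 π2 t y1 z1m) *
      π2 t y2 z2m (a2, z2) *
      Real.exp (lam * Qfun M π1 π2 lam t s (y1, y2) (z1m, z2m) (a1, a2) (z1, z2)))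

/-- Averaged local Q-function for agent 2 at time t. -/
noncomputable def Qbar2 (M : DecPOMDP S Y1 Y2 A1 A2 Z1 Z2)
    (π1 : ℕ → Y1 → Z1 → A1 × Z1 → ℝ) (π2 : ℕ → Y2 → Z2 → A2 × Z2 → ℝ)
    (lam : ℝ) (t : ℕ) (y2 : Y2) (z2m : Z2) (a2 : A2) (z2 : Z2) : ℝ :=
  (1/lam) * Real.log
    (∑ s : S, ∑ y1 : Y1, ∑ z1m : Z1, ∑ a1 : A1, ∑ z1 : Z1,
      (zetaM M π1 π2 t s (y1, y2) (z1m, z2m) / marg2 M π1 π2 t y2 z2m) *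
      π1 t y1 z1m (a1, z1) *
      Real.exp (lam * Qfun M π1 π2 lam t s (y1, y2) (z1m, z2m) (a1, a2) (z1, z2)))

/-- `g` is a greedy update for agent 1 at time `t`: at each (y¹,z¹₋) with positive
marginal probability it selects a maximizer of the averaged local Q-function. -/
def IsGreedy1 (M : DecPOMDP S Y1 Y2 A1 A2 Z1 Z2)
    (π1 : ℕ → Y1 → Z1 → A1 × Z1 → ℝ) (π2 : ℕ → Y2 → Z2 → A2 × Z2 → ℝ)
    (lam : ℝ) (t : ℕ) (g : Y1 → Z1 → A1 × Z1) : Prop :=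
  ∀ y1 z1m, 0 < marg1 M π1 π2 t y1 z1m →
    ∀ a1 z1, Qbar1 M π1 π2 lam t y1 z1m a1 z1 ≤
      Qbar1 M π1 π2 lam t y1 z1m (g y1 z1m).1 (g y1 z1m).2

/-- `g` is a greedy update for agent 2 at time `t`. -/
def IsGreedy2 (M : DecPOMDP S Y1 Y2 A1 A2 Z1 Z2)
    (π1 : ℕ → Y1 → Z1 → A1 × Z1 → ℝ) (π2 : ℕ → Y2 → Z2 → A2 × Z2 → ℝ)
    (lam : ℝ) (t : ℕ) (g : Y2 → Z2 → A2 × Z2) : Prop :=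
  ∀ y2 z2m, 0 < marg2 M π1 π2 t y2 z2m →
    ∀ a2 z2, Qbar2 M π1 π2 lam t y2 z2m a2 z2 ≤
      Qbar2 M π1 π2 lam t y2 z2m (g y2 z2m).1 (g y2 z2m).2

/-- The (deterministic) stage rule that puts all mass on `g y z`. -/
noncomputable def detRule {Y Z A : Type} (g : Y → Z → A × Z) : Y → Z → A × Z → ℝ :=
  fun y z x => if x = g y z then 1 else 0

/-! ### Auxiliary lemmas for the proof -/

private lemma zetaM_congr (M : DecPOMDP S Y1 Y2 A1 A2 Z1 Z2)
    (π1 π1' : ℕ → Y1 → Z1 → A1 × Z1 → ℝ) (π2 π2' : ℕ → Y2 → Z2 → A2 × Z2 → ℝ)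
    (t : ℕ) (h1 : ∀ k, k < t → π1 k = π1' k) (h2 : ∀ k, k < t → π2 k = π2' k) :
    zetaM M π1 π2 t = zetaM M π1' π2' t := by
  induction t with
  | zero => rfl
  | succ t ih =>
    funext s y zm
    simp only [zetaM]
    rw [ih (fun k hk => h1 k (hk.trans (Nat.lt_succ_self t)))
        (fun k hk => h2 k (hk.trans (Nat.lt_succ_self t))),
      h1 t (Nat.lt_succ_self t), h2 t (Nat.lt_succ_self t)]

private lemma Qaux_congr (M : DecPOMDP S Y1 Y2 A1 A2 Z1 Z2)
    (π1 π1' : ℕ → Y1 → Z1 → A1 × Z1 → ℝ) (π2 π2' : ℕ → Y2 → Z2 → A2 × Z2 → ℝ)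
    (lam : ℝ) (m : ℕ)
    (h1 : ∀ k, k < m → π1 (M.T - 1 - k) = π1' (M.T - 1 - k))
    (h2 : ∀ k, k < m → π2 (M.T - 1 - k) = π2' (M.T - 1 - k)) :
    Qaux M π1 π2 lam m = Qaux M π1' π2' lam m := by
  induction m with
  | zero => rfl
  | succ m ih =>
    funext s y zm a z
    simp only [Qaux]
    rw [ih (fun k hk => h1 k (hk.trans (Nat.lt_succ_self m)))
        (fun k hk => h2 k (hk.trans (Nat.lt_succ_self m))),
      h1 m (Nat.lt_succ_self m), h2 m (Nat.lt_succ_self m)]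

private lemma zetaM_nonneg (M : DecPOMDP S Y1 Y2 A1 A2 Z1 Z2)
    (π1 : ℕ → Y1 → Z1 → A1 × Z1 → ℝ) (π2 : ℕ → Y2 → Z2 → A2 × Z2 → ℝ)
    (hπ1 : IsPolicy π1) (hπ2 : IsPolicy π2) (t : ℕ) :
    ∀ s y zm, 0 ≤ zetaM M π1 π2 t s y zm := by
  induction t with
  | zero =>
    intro s y zm
    exact mul_nonneg (mul_nonneg (M.init_nonneg _) (M.phi1_nonneg _)) (M.phi2_nonneg _)
  | succ t ih =>
    intro s y zm
    refine Finset.sum_nonneg fun s' _ => Finset.sum_nonneg fun y' _ =>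
      Finset.sum_nonneg fun a' _ => Finset.sum_nonneg fun zm' _ => ?_
    exact mul_nonneg (mul_nonneg (ih s' y' zm')
      (mul_nonneg ((hπ1 t).1 _ _ _) ((hπ2 t).1 _ _ _))) (M.P_nonneg _ _ _)

private lemma sum_reorg_inner {α β γ δ ε : Type}
    [Fintype α] [Fintype β] [Fintype γ] [Fintype δ] [Fintype ε]
    (h : α → β → γ → δ → ε → ℝ) :
    (∑ a : α, ∑ b : β, ∑ c : γ, ∑ d : δ, ∑ e : ε, h a b c d e)
    = ∑ v : α × β × γ, ∑ x : δ × ε, h v.1 v.2.1 v.2.2 x.1 x.2 := by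
  simp only [Fintype.sum_prod_type]

private lemma sum_reorg1 (f : S → Y1 × Y2 → Z1 × Z2 → A1 × A2 → Z1 × Z2 → ℝ) :
    (∑ s : S, ∑ y : Y1 × Y2, ∑ zm : Z1 × Z2, ∑ a : A1 × A2, ∑ z : Z1 × Z2, f s y zm a z)
    = ∑ i : Y1 × Z1, ∑ x1 : A1 × Z1, ∑ v : S × Y2 × Z2, ∑ x2 : A2 × Z2,
        f v.1 (i.1, v.2.1) (i.2, v.2.2) (x1.1, x2.1) (x1.2, x2.2) := by
  have key := Fintype.sum_equiv
    (show ((Y1 × Z1) × (A1 × Z1) × (S × Y2 × Z2) × (A2 × Z2)) ≃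
      (S × (Y1 × Y2) × (Z1 × Z2) × (A1 × A2) × (Z1 × Z2)) from
    { toFun := fun p => (p.2.2.1.1, (p.1.1, p.2.2.1.2.1), (p.1.2, p.2.2.1.2.2),
        (p.2.1.1, p.2.2.2.1), (p.2.1.2, p.2.2.2.2)),
      invFun := fun q => ((q.2.1.1, q.2.2.1.1), (q.2.2.2.1.1, q.2.2.2.2.1),
        (q.1, q.2.1.2, q.2.2.1.2), (q.2.2.2.1.2, q.2.2.2.2.2)),
      left_inv := fun p => rfl,
      right_inv := fun q => rfl })
    (fun p : (Y1 × Z1) × (A1 × Z1) × (S × Y2 × Z2) × (A2 × Z2) =>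
      f p.2.2.1.1 (p.1.1, p.2.2.1.2.1) (p.1.2, p.2.2.1.2.2)
        (p.2.1.1, p.2.2.2.1) (p.2.1.2, p.2.2.2.2))
    (fun q : S × (Y1 × Y2) × (Z1 × Z2) × (A1 × A2) × (Z1 × Z2) =>
      f q.1 q.2.1 q.2.2.1 q.2.2.2.1 q.2.2.2.2)
    (fun p => by rfl)
  calc (∑ s : S, ∑ y : Y1 × Y2, ∑ zm : Z1 × Z2, ∑ a : A1 × A2, ∑ z : Z1 × Z2, f s y zm a z)
      = ∑ q : S × (Y1 × Y2) × (Z1 × Z2) × (A1 × A2) × (Z1 × Z2),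
          f q.1 q.2.1 q.2.2.1 q.2.2.2.1 q.2.2.2.2 := by
        simp only [Fintype.sum_prod_type]
    _ = ∑ p : (Y1 × Z1) × (A1 × Z1) × (S × Y2 × Z2) × (A2 × Z2),
          f p.2.2.1.1 (p.1.1, p.2.2.1.2.1) (p.1.2, p.2.2.1.2.2)
            (p.2.1.1, p.2.2.2.1) (p.2.1.2, p.2.2.2.2) := key.symm
    _ = _ := by simp only [Fintype.sum_prod_type]

private lemma sum_reorg2 (f : S → Y1 × Y2 → Z1 × Z2 → A1 × A2 → Z1 × Z2 → ℝ) :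
    (∑ s : S, ∑ y : Y1 × Y2, ∑ zm : Z1 × Z2, ∑ a : A1 × A2, ∑ z : Z1 × Z2, f s y zm a z)
    = ∑ i : Y2 × Z2, ∑ x2 : A2 × Z2, ∑ v : S × Y1 × Z1, ∑ x1 : A1 × Z1,
        f v.1 (v.2.1, i.1) (v.2.2, i.2) (x1.1, x2.1) (x1.2, x2.2) := by
  have key := Fintype.sum_equiv
    (show ((Y2 × Z2) × (A2 × Z2) × (S × Y1 × Z1) × (A1 × Z1)) ≃
      (S × (Y1 × Y2) × (Z1 × Z2) × (A1 × A2) × (Z1 × Z2)) from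
    { toFun := fun p => (p.2.2.1.1, (p.2.2.1.2.1, p.1.1), (p.2.2.1.2.2, p.1.2),
        (p.2.2.2.1, p.2.1.1), (p.2.2.2.2, p.2.1.2)),
      invFun := fun q => ((q.2.1.2, q.2.2.1.2), (q.2.2.2.1.2, q.2.2.2.2.2),
        (q.1, q.2.1.1, q.2.2.1.1), (q.2.2.2.1.1, q.2.2.2.2.1)),
      left_inv := fun p => rfl,
      right_inv := fun q => rfl })
    (fun p : (Y2 × Z2) × (A2 × Z2) × (S × Y1 × Z1) × (A1 × Z1) =>
      f p.2.2.1.1 (p.2.2.1.2.1, p.1.1) (p.2.2.1.2.2, p.1.2)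
        (p.2.2.2.1, p.2.1.1) (p.2.2.2.2, p.2.1.2))
    (fun q : S × (Y1 × Y2) × (Z1 × Z2) × (A1 × A2) × (Z1 × Z2) =>
      f q.1 q.2.1 q.2.2.1 q.2.2.2.1 q.2.2.2.2)
    (fun p => by rfl)
  calc (∑ s : S, ∑ y : Y1 × Y2, ∑ zm : Z1 × Z2, ∑ a : A1 × A2, ∑ z : Z1 × Z2, f s y zm a z)
      = ∑ q : S × (Y1 × Y2) × (Z1 × Z2) × (A1 × A2) × (Z1 × Z2),
          f q.1 q.2.1 q.2.2.1 q.2.2.2.1 q.2.2.2.2 := by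
        simp only [Fintype.sum_prod_type]
    _ = ∑ p : (Y2 × Z2) × (A2 × Z2) × (S × Y1 × Z1) × (A1 × Z1),
          f p.2.2.1.1 (p.2.2.1.2.1, p.1.1) (p.2.2.1.2.2, p.1.2)
            (p.2.2.2.1, p.2.1.1) (p.2.2.2.2, p.2.1.2) := key.symm
    _ = _ := by simp only [Fintype.sum_prod_type]

/-- Local averaged exponential value for agent 1 (unnormalized). -/
private noncomputable def F1 (M : DecPOMDP S Y1 Y2 A1 A2 Z1 Z2)
    (π1 : ℕ → Y1 → Z1 → A1 × Z1 → ℝ) (π2 : ℕ → Y2 → Z2 → A2 × Z2 → ℝ)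
    (lam : ℝ) (t : ℕ) (i : Y1 × Z1) (x1 : A1 × Z1) : ℝ :=
  ∑ v : S × Y2 × Z2, ∑ x2 : A2 × Z2,
    zetaM M π1 π2 t v.1 (i.1, v.2.1) (i.2, v.2.2) * π2 t v.2.1 v.2.2 x2 *
      Real.exp (lam * Qfun M π1 π2 lam t v.1 (i.1, v.2.1) (i.2, v.2.2)
        (x1.1, x2.1) (x1.2, x2.2))

/-- Local averaged exponential value for agent 2 (unnormalized). -/
private noncomputable def F2 (M : DecPOMDP S Y1 Y2 A1 A2 Z1 Z2)
    (π1 : ℕ → Y1 → Z1 → A1 × Z1 → ℝ) (π2 : ℕ → Y2 → Z2 → A2 × Z2 → ℝ)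
    (lam : ℝ) (t : ℕ) (i : Y2 × Z2) (x2 : A2 × Z2) : ℝ :=
  ∑ v : S × Y1 × Z1, ∑ x1 : A1 × Z1,
    zetaM M π1 π2 t v.1 (v.2.1, i.1) (v.2.2, i.2) * π1 t v.2.1 v.2.2 x1 *
      Real.exp (lam * Qfun M π1 π2 lam t v.1 (v.2.1, i.1) (v.2.2, i.2)
        (x1.1, x2.1) (x1.2, x2.2))

private lemma marg1_eq (M : DecPOMDP S Y1 Y2 A1 A2 Z1 Z2)
    (π1 : ℕ → Y1 → Z1 → A1 × Z1 → ℝ) (π2 : ℕ → Y2 → Z2 → A2 × Z2 → ℝ)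
    (t : ℕ) (y1 : Y1) (z1m : Z1) :
    marg1 M π1 π2 t y1 z1m
      = ∑ v : S × Y2 × Z2, zetaM M π1 π2 t v.1 (y1, v.2.1) (z1m, v.2.2) := by
  simp only [marg1, Fintype.sum_prod_type]

private lemma marg2_eq (M : DecPOMDP S Y1 Y2 A1 A2 Z1 Z2)
    (π1 : ℕ → Y1 → Z1 → A1 × Z1 → ℝ) (π2 : ℕ → Y2 → Z2 → A2 × Z2 → ℝ)
    (t : ℕ) (y2 : Y2) (z2m : Z2) :
    marg2 M π1 π2 t y2 z2m
      = ∑ v : S × Y1 × Z1, zetaM M π1 π2 t v.1 (v.2.1, y2) (v.2.2, z2m) := by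
  simp only [marg2, Fintype.sum_prod_type]

private lemma J1_eq (M : DecPOMDP S Y1 Y2 A1 A2 Z1 Z2)
    (π1 : ℕ → Y1 → Z1 → A1 × Z1 → ℝ) (π2 : ℕ → Y2 → Z2 → A2 × Z2 → ℝ)
    (lam : ℝ) (t : ℕ) :
    Jrisk M π1 π2 lam t = (1/lam) * Real.log (∑ i : Y1 × Z1, ∑ x1 : A1 × Z1,
      π1 t i.1 i.2 x1 * F1 M π1 π2 lam t i x1) := by
  unfold Jrisk
  congr 2
  rw [sum_reorg1]
  refine Finset.sum_congr rfl fun i _ => ?_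
  refine Finset.sum_congr rfl fun x1 _ => ?_
  unfold F1
  rw [Finset.mul_sum]
  refine Finset.sum_congr rfl fun v _ => ?_
  rw [Finset.mul_sum]
  refine Finset.sum_congr rfl fun x2 _ => ?_
  simp only [Prod.mk.eta]
  ring

private lemma J2_eq (M : DecPOMDP S Y1 Y2 A1 A2 Z1 Z2)
    (π1 : ℕ → Y1 → Z1 → A1 × Z1 → ℝ) (π2 : ℕ → Y2 → Z2 → A2 × Z2 → ℝ)
    (lam : ℝ) (t : ℕ) :
    Jrisk M π1 π2 lam t = (1/lam) * Real.log (∑ i : Y2 × Z2, ∑ x2 : A2 × Z2,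
      π2 t i.1 i.2 x2 * F2 M π1 π2 lam t i x2) := by
  unfold Jrisk
  congr 2
  rw [sum_reorg2]
  refine Finset.sum_congr rfl fun i _ => ?_
  refine Finset.sum_congr rfl fun x2 _ => ?_
  unfold F2
  rw [Finset.mul_sum]
  refine Finset.sum_congr rfl fun v _ => ?_
  rw [Finset.mul_sum]
  refine Finset.sum_congr rfl fun x1 _ => ?_
  simp only [Prod.mk.eta]
  ring

private lemma Qbar1_eq (M : DecPOMDP S Y1 Y2 A1 A2 Z1 Z2)
    (π1 : ℕ → Y1 → Z1 → A1 × Z1 → ℝ) (π2 : ℕ → Y2 → Z2 → A2 × Z2 → ℝ)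
    (lam : ℝ) (t : ℕ) (y1 : Y1) (z1m : Z1) (a1 : A1) (z1 : Z1) :
    Qbar1 M π1 π2 lam t y1 z1m a1 z1
      = (1/lam) * Real.log (F1 M π1 π2 lam t (y1, z1m) (a1, z1)
          / marg1 M π1 π2 t y1 z1m) := by
  unfold Qbar1
  congr 2
  rw [sum_reorg_inner]
  unfold F1
  rw [Finset.sum_div]
  refine Finset.sum_congr rfl fun v _ => ?_
  rw [Finset.sum_div]
  refine Finset.sum_congr rfl fun x2 _ => ?_
  simp only [Prod.mk.eta]
  ring

private lemma Qbar2_eq (M : DecPOMDP S Y1 Y2 A1 A2 Z1 Z2)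
    (π1 : ℕ → Y1 → Z1 → A1 × Z1 → ℝ) (π2 : ℕ → Y2 → Z2 → A2 × Z2 → ℝ)
    (lam : ℝ) (t : ℕ) (y2 : Y2) (z2m : Z2) (a2 : A2) (z2 : Z2) :
    Qbar2 M π1 π2 lam t y2 z2m a2 z2
      = (1/lam) * Real.log (F2 M π1 π2 lam t (y2, z2m) (a2, z2)
          / marg2 M π1 π2 t y2 z2m) := by
  unfold Qbar2
  congr 2
  rw [sum_reorg_inner]
  unfold F2
  rw [Finset.sum_div]
  refine Finset.sum_congr rfl fun v _ => ?_
  rw [Finset.sum_div]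
  refine Finset.sum_congr rfl fun x1 _ => ?_
  simp only [Prod.mk.eta]
  ring

/-- Abstract core of the improvement argument. -/
private lemma log_core {I X : Type} [Fintype I] [Fintype X]
    (F : I → X → ℝ) (μ : I → ℝ) (ρ : I → X → ℝ) (g : I → X)
    (hμ0 : ∀ i, 0 ≤ μ i)
    (hF0 : ∀ i x, 0 ≤ F i x)
    (hz : ∀ i, μ i = 0 → ∀ x, F i x = 0)
    (hp : ∀ i, 0 < μ i → ∀ x, 0 < F i x)
    (hgr : ∀ i, 0 < μ i → ∀ x, F i x ≤ F i (g i))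
    (hρ0 : ∀ i x, 0 ≤ ρ i x) (hρ1 : ∀ i, ∑ x, ρ i x = 1) :
    Real.log (∑ i, ∑ x, ρ i x * F i x) ≤ Real.log (∑ i, F i (g i)) := by
  have hterm : ∀ i, (∑ x, ρ i x * F i x) ≤ F i (g i) := by
    intro i
    rcases (hμ0 i).eq_or_lt with h | h
    · have h0 : ∀ x, F i x = 0 := hz i h.symm
      rw [Finset.sum_eq_zero fun x _ => by rw [h0 x, mul_zero], h0 (g i)]
    · calc (∑ x, ρ i x * F i x) ≤ ∑ x, ρ i x * F i (g i) :=
        Finset.sum_le_sum fun x _ => mul_le_mul_of_nonneg_left (hgr i h x) (hρ0 i x)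
      _ = F i (g i) := by rw [← Finset.sum_mul, hρ1 i, one_mul]
  have hA0 : 0 ≤ ∑ i, ∑ x, ρ i x * F i x :=
    Finset.sum_nonneg fun i _ => Finset.sum_nonneg fun x _ =>
      mul_nonneg (hρ0 i x) (hF0 i x)
  have hAB : (∑ i, ∑ x, ρ i x * F i x) ≤ ∑ i, F i (g i) :=
    Finset.sum_le_sum fun i _ => hterm i
  rcases hA0.eq_or_lt with h | h
  · have hBz : ∀ i, F i (g i) = 0 := by
      intro i
      rcases (hμ0 i).eq_or_lt with h0 | h0
      · exact hz i h0.symm _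
      · exfalso
        obtain ⟨x0, _, hx0⟩ := Finset.exists_lt_of_sum_lt
          (show (∑ _x : X, (0:ℝ)) < ∑ x, ρ i x by
            rw [Finset.sum_const_zero, hρ1 i]; norm_num)
        have hipos : 0 < ∑ x, ρ i x * F i x :=
          Finset.sum_pos' (fun x _ => mul_nonneg (hρ0 i x) (hF0 i x))
            ⟨x0, Finset.mem_univ x0, mul_pos hx0 (hp i h0 x0)⟩
        have hApos : 0 < ∑ i, ∑ x, ρ i x * F i x :=
          Finset.sum_pos' (fun j _ => Finset.sum_nonneg fun x _ =>
            mul_nonneg (hρ0 j x) (hF0 j x)) ⟨i, Finset.mem_univ i, hipos⟩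
        rw [← h] at hApos
        exact lt_irrefl 0 hApos
    rw [← h, Finset.sum_eq_zero fun i _ => hBz i]
  · exact Real.log_le_log h hAB

/-- **Proposition 1 (Performance Improvement Guarantee).**
For λ > 0, a joint agent-state based policy (π1, π2), a time t ∈ {1,…,T}
(0-indexed: t < T) and either agent i ∈ {1,2}: if π̄ⁱ_t is any greedy update for
agent i at time t and π' is obtained from π by replacing the stage-t rule of
agent i by π̄ⁱ_t, then J^λ_{t:T}(π') ≥ J^λ_{t:T}(π). -/
theorem performance_improvement_guarantee
    (M : DecPOMDP S Y1 Y2 A1 A2 Z1 Z2)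
    (π1 : ℕ → Y1 → Z1 → A1 × Z1 → ℝ) (π2 : ℕ → Y2 → Z2 → A2 × Z2 → ℝ)
    (hπ1 : IsPolicy π1) (hπ2 : IsPolicy π2)
    (lam : ℝ) (hlam : 0 < lam) (t : ℕ) (ht : t < M.T) :
    (∀ g : Y1 → Z1 → A1 × Z1, IsGreedy1 M π1 π2 lam t g →
      Jrisk M π1 π2 lam t ≤ Jrisk M (Function.update π1 t (detRule g)) π2 lam t) ∧
    (∀ g : Y2 → Z2 → A2 × Z2, IsGreedy2 M π1 π2 lam t g →
      Jrisk M π1 π2 lam t ≤ Jrisk M π1 (Function.update π2 t (detRule g)) lam t) := by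
  constructor
  · -- Agent 1
    intro g hg
    set π1' := Function.update π1 t (detRule g) with hπ1'def
    have hζ : zetaM M π1' π2 t = zetaM M π1 π2 t :=
      (zetaM_congr M π1 π1' π2 π2 t
        (fun k hk => (Function.update_of_ne (Nat.ne_of_lt hk) _ _).symm)
        (fun _ _ => rfl)).symm
    have hQ : Qfun M π1' π2 lam t = Qfun M π1 π2 lam t := by
      unfold Qfun
      exact (Qaux_congr M π1 π1' π2 π2 lam (M.T - 1 - t)
        (fun k hk => (Function.update_of_ne (by omega) _ _).symm)
        (fun _ _ => rfl)).symm
    have hF1' : F1 M π1' π2 lam t = F1 M π1 π2 lam t := by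
      unfold F1; rw [hζ, hQ]
    have hJ' : Jrisk M π1' π2 lam t
        = (1/lam) * Real.log (∑ i : Y1 × Z1, F1 M π1 π2 lam t i (g i.1 i.2)) := by
      rw [J1_eq M π1' π2 lam t, hF1']
      congr 2
      refine Finset.sum_congr rfl fun i _ => ?_
      have hup : π1' t = detRule g := Function.update_self t (detRule g) π1
      rw [hup]
      simp only [detRule, ite_mul, one_mul, zero_mul, Finset.sum_ite_eq',
        Finset.mem_univ, if_true]
    have hζ0 : ∀ s y zm, 0 ≤ zetaM M π1 π2 t s y zm := zetaM_nonneg M π1 π2 hπ1 hπ2 t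
    have hμ0 : ∀ i : Y1 × Z1, 0 ≤ marg1 M π1 π2 t i.1 i.2 := fun i => by
      rw [marg1_eq]; exact Finset.sum_nonneg fun v _ => hζ0 _ _ _
    have hF0 : ∀ (i : Y1 × Z1) x1, 0 ≤ F1 M π1 π2 lam t i x1 := fun i x1 =>
      Finset.sum_nonneg fun v _ => Finset.sum_nonneg fun x2 _ =>
        mul_nonneg (mul_nonneg (hζ0 _ _ _) ((hπ2 t).1 _ _ _)) (Real.exp_nonneg _)
    have hzero : ∀ i : Y1 × Z1, marg1 M π1 π2 t i.1 i.2 = 0 →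
        ∀ x1, F1 M π1 π2 lam t i x1 = 0 := by
      intro i hm x1
      rw [marg1_eq] at hm
      have hv : ∀ v : S × Y2 × Z2, zetaM M π1 π2 t v.1 (i.1, v.2.1) (i.2, v.2.2) = 0 :=
        fun v => (Finset.sum_eq_zero_iff_of_nonneg
          (fun v _ => hζ0 _ _ _)).1 hm v (Finset.mem_univ v)
      exact Finset.sum_eq_zero fun v _ => Finset.sum_eq_zero fun x2 _ => by
        rw [hv v, zero_mul, zero_mul]
    have hpos : ∀ i : Y1 × Z1, 0 < marg1 M π1 π2 t i.1 i.2 →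
        ∀ x1, 0 < F1 M π1 π2 lam t i x1 := by
      intro i hm x1
      rw [marg1_eq] at hm
      obtain ⟨v0, -, hv0⟩ := Finset.exists_lt_of_sum_lt
        (show (∑ _v : S × Y2 × Z2, (0:ℝ)) <
            ∑ v : S × Y2 × Z2, zetaM M π1 π2 t v.1 (i.1, v.2.1) (i.2, v.2.2) by
          rw [Finset.sum_const_zero]; exact hm)
      obtain ⟨x0, -, hx0⟩ := Finset.exists_lt_of_sum_lt
        (show (∑ _x : A2 × Z2, (0:ℝ)) < ∑ x : A2 × Z2, π2 t v0.2.1 v0.2.2 x by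
          rw [Finset.sum_const_zero, (hπ2 t).2]; norm_num)
      refine Finset.sum_pos' (fun v _ => Finset.sum_nonneg fun x2 _ =>
          mul_nonneg (mul_nonneg (hζ0 _ _ _) ((hπ2 t).1 _ _ _)) (Real.exp_nonneg _))
        ⟨v0, Finset.mem_univ v0, Finset.sum_pos' (fun x2 _ =>
          mul_nonneg (mul_nonneg (hζ0 _ _ _) ((hπ2 t).1 _ _ _)) (Real.exp_nonneg _))
          ⟨x0, Finset.mem_univ x0, mul_pos (mul_pos hv0 hx0) (Real.exp_pos _)⟩⟩
    have hgr : ∀ i : Y1 × Z1, 0 < marg1 M π1 π2 t i.1 i.2 →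
        ∀ x1, F1 M π1 π2 lam t i x1 ≤ F1 M π1 π2 lam t i (g i.1 i.2) := by
      intro i hm x1
      have h := hg i.1 i.2 hm x1.1 x1.2
      rw [Qbar1_eq, Qbar1_eq] at h
      simp only [Prod.mk.eta] at h
      have hlog := le_of_mul_le_mul_left h (show (0:ℝ) < 1/lam by positivity)
      have h1 : 0 < F1 M π1 π2 lam t i x1 / marg1 M π1 π2 t i.1 i.2 :=
        div_pos (hpos i hm x1) hm
      have h2 : 0 < F1 M π1 π2 lam t i (g i.1 i.2) / marg1 M π1 π2 t i.1 i.2 :=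
        div_pos (hpos i hm _) hm
      exact (div_le_div_iff_of_pos_right hm).1 ((Real.log_le_log_iff h1 h2).1 hlog)
    rw [J1_eq M π1 π2 lam t, hJ']
    refine mul_le_mul_of_nonneg_left ?_ (by positivity)
    exact log_core (F1 M π1 π2 lam t) (fun i => marg1 M π1 π2 t i.1 i.2)
      (fun i x => π1 t i.1 i.2 x) (fun i => g i.1 i.2)
      hμ0 hF0 hzero hpos hgr (fun i x => (hπ1 t).1 _ _ _) (fun i => (hπ1 t).2 _ _)
  · -- Agent 2
    intro g hg
    set π2' := Function.update π2 t (detRule g) with hπ2'def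
    have hζ : zetaM M π1 π2' t = zetaM M π1 π2 t :=
      (zetaM_congr M π1 π1 π2 π2' t (fun _ _ => rfl)
        (fun k hk => (Function.update_of_ne (Nat.ne_of_lt hk) _ _).symm)).symm
    have hQ : Qfun M π1 π2' lam t = Qfun M π1 π2 lam t := by
      unfold Qfun
      exact (Qaux_congr M π1 π1 π2 π2' lam (M.T - 1 - t) (fun _ _ => rfl)
        (fun k hk => (Function.update_of_ne (by omega) _ _).symm)).symm
    have hF2' : F2 M π1 π2' lam t = F2 M π1 π2 lam t := by
      unfold F2; rw [hζ, hQ]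
    have hJ' : Jrisk M π1 π2' lam t
        = (1/lam) * Real.log (∑ i : Y2 × Z2, F2 M π1 π2 lam t i (g i.1 i.2)) := by
      rw [J2_eq M π1 π2' lam t, hF2']
      congr 2
      refine Finset.sum_congr rfl fun i _ => ?_
      have hup : π2' t = detRule g := Function.update_self t (detRule g) π2
      rw [hup]
      simp only [detRule, ite_mul, one_mul, zero_mul, Finset.sum_ite_eq',
        Finset.mem_univ, if_true]
    have hζ0 : ∀ s y zm, 0 ≤ zetaM M π1 π2 t s y zm := zetaM_nonneg M π1 π2 hπ1 hπ2 t
    have hμ0 : ∀ i : Y2 × Z2, 0 ≤ marg2 M π1 π2 t i.1 i.2 := fun i => by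
      rw [marg2_eq]; exact Finset.sum_nonneg fun v _ => hζ0 _ _ _
    have hF0 : ∀ (i : Y2 × Z2) x2, 0 ≤ F2 M π1 π2 lam t i x2 := fun i x2 =>
      Finset.sum_nonneg fun v _ => Finset.sum_nonneg fun x1 _ =>
        mul_nonneg (mul_nonneg (hζ0 _ _ _) ((hπ1 t).1 _ _ _)) (Real.exp_nonneg _)
    have hzero : ∀ i : Y2 × Z2, marg2 M π1 π2 t i.1 i.2 = 0 →
        ∀ x2, F2 M π1 π2 lam t i x2 = 0 := by
      intro i hm x2
      rw [marg2_eq] at hm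
      have hv : ∀ v : S × Y1 × Z1, zetaM M π1 π2 t v.1 (v.2.1, i.1) (v.2.2, i.2) = 0 :=
        fun v => (Finset.sum_eq_zero_iff_of_nonneg
          (fun v _ => hζ0 _ _ _)).1 hm v (Finset.mem_univ v)
      exact Finset.sum_eq_zero fun v _ => Finset.sum_eq_zero fun x1 _ => by
        rw [hv v, zero_mul, zero_mul]
    have hpos : ∀ i : Y2 × Z2, 0 < marg2 M π1 π2 t i.1 i.2 →
        ∀ x2, 0 < F2 M π1 π2 lam t i x2 := by
      intro i hm x2
      rw [marg2_eq] at hm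
      obtain ⟨v0, -, hv0⟩ := Finset.exists_lt_of_sum_lt
        (show (∑ _v : S × Y1 × Z1, (0:ℝ)) <
            ∑ v : S × Y1 × Z1, zetaM M π1 π2 t v.1 (v.2.1, i.1) (v.2.2, i.2) by
          rw [Finset.sum_const_zero]; exact hm)
      obtain ⟨x0, -, hx0⟩ := Finset.exists_lt_of_sum_lt
        (show (∑ _x : A1 × Z1, (0:ℝ)) < ∑ x : A1 × Z1, π1 t v0.2.1 v0.2.2 x by
          rw [Finset.sum_const_zero, (hπ1 t).2]; norm_num)
      refine Finset.sum_pos' (fun v _ => Finset.sum_nonneg fun x1 _ =>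
          mul_nonneg (mul_nonneg (hζ0 _ _ _) ((hπ1 t).1 _ _ _)) (Real.exp_nonneg _))
        ⟨v0, Finset.mem_univ v0, Finset.sum_pos' (fun x1 _ =>
          mul_nonneg (mul_nonneg (hζ0 _ _ _) ((hπ1 t).1 _ _ _)) (Real.exp_nonneg _))
          ⟨x0, Finset.mem_univ x0, mul_pos (mul_pos hv0 hx0) (Real.exp_pos _)⟩⟩
    have hgr : ∀ i : Y2 × Z2, 0 < marg2 M π1 π2 t i.1 i.2 →
        ∀ x2, F2 M π1 π2 lam t i x2 ≤ F2 M π1 π2 lam t i (g i.1 i.2) := by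
      intro i hm x2
      have h := hg i.1 i.2 hm x2.1 x2.2
      rw [Qbar2_eq, Qbar2_eq] at h
      simp only [Prod.mk.eta] at h
      have hlog := le_of_mul_le_mul_left h (show (0:ℝ) < 1/lam by positivity)
      have h1 : 0 < F2 M π1 π2 lam t i x2 / marg2 M π1 π2 t i.1 i.2 :=
        div_pos (hpos i hm x2) hm
      have h2 : 0 < F2 M π1 π2 lam t i (g i.1 i.2) / marg2 M π1 π2 t i.1 i.2 :=
        div_pos (hpos i hm _) hm
      exact (div_le_div_iff_of_pos_right hm).1 ((Real.log_le_log_iff h1 h2).1 hlog)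
    rw [J2_eq M π1 π2 lam t, hJ']
    refine mul_le_mul_of_nonneg_left ?_ (by positivity)
    exact log_core (F2 M π1 π2 lam t) (fun i => marg2 M π1 π2 t i.1 i.2)
      (fun i x => π2 t i.1 i.2 x) (fun i => g i.1 i.2)
      hμ0 hF0 hzero hpos hgr (fun i x => (hπ2 t).1 _ _ _) (fun i => (hπ2 t).2 _ _)
end

section
/- The risk-seeking centralized Q-function computes the conditional entropic value of the reward-to-go: Fix λ > 0 and a joint agent-state based policy π. For every t ∈ {1,…,T} and every (s,y,z₋,a,z) such that P^π(S_t = s, Y_t = y, Z_{t−1} = z₋, A_t = a, Z_t = z) > 0, one has exp(λ·Q^π_t(s,y,z₋,a,z)) = E^π[ exp(λ·Σ_{τ=t}^{T} r(S_τ,A_τ)) | S_t = s, Y_t = y, Z_{t−1} = z₋, A_t = a, Z_t = z ]. Consequently, the risk-seeking performance from time t satisfies J^λ_{t:T}(π) = (1/λ)·log E^π[ exp(λ·Σ_{τ=t}^{T} r(S_τ,A_τ)) ]. -/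
open Finset
open scoped Classical

variable {S Y1 Y2 A1 A2 Z1 Z2 : Type}
  [Fintype S] [Fintype Y1] [Fintype Y2] [Fintype A1] [Fintype A2]
  [Fintype Z1] [Fintype Z2]
  [Nonempty S] [Nonempty Y1] [Nonempty Y2] [Nonempty A1] [Nonempty A2]
  [Nonempty Z1] [Nonempty Z2]

/-- Trajectory space: the initial agent states z₀ together with, for each
(0-indexed) time t < T, the tuple ((s_t, y_t), (a_t, z_t)). -/
abbrev Traj (M : DecPOMDP S Y1 Y2 A1 A2 Z1 Z2) : Type :=
  (Z1 × Z2) × (Fin M.T → (S × (Y1 × Y2)) × ((A1 × A2) × (Z1 × Z2)))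

def sOf (M : DecPOMDP S Y1 Y2 A1 A2 Z1 Z2) (ω : Traj M) (t : Fin M.T) : S :=
  (ω.2 t).1.1
def yOf (M : DecPOMDP S Y1 Y2 A1 A2 Z1 Z2) (ω : Traj M) (t : Fin M.T) : Y1 × Y2 :=
  (ω.2 t).1.2
def aOf (M : DecPOMDP S Y1 Y2 A1 A2 Z1 Z2) (ω : Traj M) (t : Fin M.T) : A1 × A2 :=
  (ω.2 t).2.1
def zOf (M : DecPOMDP S Y1 Y2 A1 A2 Z1 Z2) (ω : Traj M) (t : Fin M.T) : Z1 × Z2 :=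
  (ω.2 t).2.2

/-- The agent state Z_{t-1} held before acting at time t (Z at time −1 is z₀). -/
def zprev (M : DecPOMDP S Y1 Y2 A1 A2 Z1 Z2) (ω : Traj M) (t : Fin M.T) : Z1 × Z2 :=
  if t.val = 0 then ω.1
  else zOf M ω ⟨t.val - 1, lt_of_le_of_lt (Nat.sub_le _ _) t.isLt⟩

/-- Probability of a trajectory under the joint agent-state based policy (π1, π2):
φ¹(z¹₀)·φ²(z²₀)·ζ₁(s₁,y₁)·Π_t π_t(a_t,z_t|y_t,z_{t−1})·Π_t P(s_{t+1},y_{t+1}|s_t,a_t). -/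
noncomputable def trajProb (M : DecPOMDP S Y1 Y2 A1 A2 Z1 Z2)
    (π1 : ℕ → Y1 → Z1 → A1 × Z1 → ℝ) (π2 : ℕ → Y2 → Z2 → A2 × Z2 → ℝ)
    (ω : Traj M) : ℝ :=
  M.phi1 ω.1.1 * M.phi2 ω.1.2 *
  M.init (sOf M ω ⟨0, M.T_pos⟩, (yOf M ω ⟨0, M.T_pos⟩).1, (yOf M ω ⟨0, M.T_pos⟩).2) *
  (∏ t : Fin M.T,
    (π1 t.val (yOf M ω t).1 (zprev M ω t).1 ((aOf M ω t).1, (zOf M ω t).1) *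
     π2 t.val (yOf M ω t).2 (zprev M ω t).2 ((aOf M ω t).2, (zOf M ω t).2))) *
  (∏ t : Fin M.T,
    if h : t.val + 1 < M.T then
      M.P (sOf M ω t) (aOf M ω t)
        (sOf M ω ⟨t.val + 1, h⟩, (yOf M ω ⟨t.val + 1, h⟩).1, (yOf M ω ⟨t.val + 1, h⟩).2)
    else 1)

/-- Probability of an event in trajectory space. -/
noncomputable def prEvent (M : DecPOMDP S Y1 Y2 A1 A2 Z1 Z2)
    (π1 : ℕ → Y1 → Z1 → A1 × Z1 → ℝ) (π2 : ℕ → Y2 → Z2 → A2 × Z2 → ℝ)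
    (E : Traj M → Prop) : ℝ :=
  ∑ ω : Traj M, if E ω then trajProb M π1 π2 ω else 0


/-! ### Auxiliary development -/

section AuxDev
set_option linter.unusedSectionVars false

local notation "XX" => (S × (Y1 × Y2)) × ((A1 × A2) × (Z1 × Z2))

variable (M : DecPOMDP S Y1 Y2 A1 A2 Z1 Z2)
  (π1 : ℕ → Y1 → Z1 → A1 × Z1 → ℝ) (π2 : ℕ → Y2 → Z2 → A2 × Z2 → ℝ)
  (lam : ℝ)

/-- joint one-stage policy factor -/
def pf (t : ℕ) (y : Y1 × Y2) (z : Z1 × Z2) (a : A1 × A2) (z' : Z1 × Z2) : ℝ :=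
  π1 t y.1 z.1 (a.1, z'.1) * π2 t y.2 z.2 (a.2, z'.2)

def trip (x : XX) : S × (A1 × A2) × (Z1 × Z2) := (x.1.1, x.2.1, x.2.2)

def zpg (z0 : Z1 × Z2) {k : ℕ} (g : Fin k → XX) (t : Fin k) : Z1 × Z2 :=
  if t.val = 0 then z0
  else (g ⟨t.val - 1, lt_of_le_of_lt (Nat.sub_le _ _) t.isLt⟩).2.2

/-- weight of prefix trajectory up to (and including) time n -/
noncomputable def headW (n : ℕ) (z0 : Z1 × Z2) (g : Fin (n+1) → XX) : ℝ :=
  M.phi1 z0.1 * M.phi2 z0.2 *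
  M.init ((g 0).1.1, (g 0).1.2.1, (g 0).1.2.2) *
  (∏ t : Fin (n+1), pf π1 π2 t.val (g t).1.2 (zpg z0 g t) (g t).2.1 (g t).2.2) *
  (∏ t : Fin n, M.P (g t.castSucc).1.1 (g t.castSucc).2.1
      ((g t.succ).1.1, (g t.succ).1.2.1, (g t.succ).1.2.2))

/-- weight of the tail trajectory, after acting at time t0 with summary c -/
noncomputable def chainW (t0 : ℕ) (m : ℕ) (c : S × (A1 × A2) × (Z1 × Z2))
    (h : Fin m → XX) : ℝ :=
  ∏ j : Fin m,
    (M.P ((Fin.cons c (trip ∘ h) : Fin (m+1) → S × (A1 × A2) × (Z1 × Z2)) j.castSucc).1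
        ((Fin.cons c (trip ∘ h) : Fin (m+1) → S × (A1 × A2) × (Z1 × Z2)) j.castSucc).2.1
        ((h j).1.1, (h j).1.2.1, (h j).1.2.2) *
     pf π1 π2 (t0 + 1 + j.val) (h j).1.2
       ((Fin.cons c (trip ∘ h) : Fin (m+1) → S × (A1 × A2) × (Z1 × Z2)) j.castSucc).2.2
       (h j).2.1 (h j).2.2)

lemma exists_pos_of_sum_one {α : Type} [Fintype α] {f : α → ℝ}
    (h0 : ∀ x, 0 ≤ f x) (h1 : ∑ x, f x = 1) : ∃ x, 0 < f x := by
  by_contra h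
  push_neg at h
  have hz : ∀ x, f x = 0 := fun x => le_antisymm (h x) (h0 x)
  rw [Finset.sum_congr rfl (fun x _ => hz x)] at h1
  simp at h1

lemma pf_nonneg (hπ1 : IsPolicy π1) (hπ2 : IsPolicy π2) (t : ℕ) (y z a z') :
    0 ≤ pf π1 π2 t y z a z' :=
  mul_nonneg ((hπ1 t).1 _ _ _) ((hπ2 t).1 _ _ _)

lemma pf_sum (hπ1 : IsPolicy π1) (hπ2 : IsPolicy π2) (t : ℕ) (y : Y1 × Y2) (z : Z1 × Z2) :
    ∑ v : (A1 × A2) × (Z1 × Z2), pf π1 π2 t y z v.1 v.2 = 1 := by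
  rw [← Fintype.sum_equiv
      (⟨fun q => ((q.1.1, q.2.1), (q.1.2, q.2.2)), fun v => ((v.1.1, v.2.1), (v.1.2, v.2.2)),
        fun q => rfl, fun v => rfl⟩ :
        (A1 × Z1) × (A2 × Z2) ≃ (A1 × A2) × (Z1 × Z2))
      (fun q => π1 t y.1 z.1 q.1 * π2 t y.2 z.2 q.2)
      (fun v => pf π1 π2 t y z v.1 v.2)
      (fun q => by simp [pf])]
  rw [Fintype.sum_prod_type]
  dsimp only
  rw [← Finset.sum_mul_sum]
  rw [(hπ1 t).2, (hπ2 t).2, mul_one]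

lemma step_sum (hπ1 : IsPolicy π1) (hπ2 : IsPolicy π2) (t : ℕ) (s : S) (a : A1 × A2)
    (z : Z1 × Z2) :
    ∑ x : XX, M.P s a (x.1.1, x.1.2.1, x.1.2.2) * pf π1 π2 t x.1.2 z x.2.1 x.2.2 = 1 := by
  rw [Fintype.sum_prod_type]
  dsimp only
  have h1 : ∀ u : S × Y1 × Y2,
      (∑ v : (A1 × A2) × (Z1 × Z2),
        M.P s a (u.1, u.2.1, u.2.2) * pf π1 π2 t u.2 z v.1 v.2)
      = M.P s a u := by
    intro u
    rw [← Finset.mul_sum, pf_sum π1 π2 hπ1 hπ2, mul_one]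
  rw [Finset.sum_congr rfl fun u _ => h1 u, M.P_sum]

/-- cons equivalence -/
def consE (m : ℕ) : (Fin (m+1) → XX) ≃ XX × (Fin m → XX) where
  toFun f := (f 0, Fin.tail f)
  invFun p := Fin.cons p.1 p.2
  left_inv f := Fin.cons_self_tail f
  right_inv p := by simp

/-- snoc equivalence -/
def snocE (m : ℕ) : (Fin (m+1) → XX) ≃ (Fin m → XX) × XX where
  toFun f := (Fin.init f, f (Fin.last m))
  invFun p := Fin.snoc p.1 p.2
  left_inv f := Fin.snoc_init_self f
  right_inv p := by simp

lemma chainW_cons (t0 m : ℕ) (c : S × (A1 × A2) × (Z1 × Z2)) (h : Fin (m+1) → XX) :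
    chainW M π1 π2 t0 (m+1) c h
    = (M.P c.1 c.2.1 ((h 0).1.1, (h 0).1.2.1, (h 0).1.2.2) *
       pf π1 π2 (t0+1) (h 0).1.2 c.2.2 (h 0).2.1 (h 0).2.2) *
      chainW M π1 π2 (t0+1) m (trip (h 0)) (Fin.tail h) := by
  have hct : (Fin.cons (trip (h 0)) (trip ∘ Fin.tail h) :
      Fin (m+1) → S × (A1 × A2) × (Z1 × Z2)) = trip ∘ h := by
    funext i
    induction i using Fin.cases with
    | zero => rfl
    | succ i => rfl
  have key : ∀ j : Fin m,
      (Fin.cons c (trip ∘ h) : Fin (m+2) → S × (A1 × A2) × (Z1 × Z2)) j.succ.castSucc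
      = (Fin.cons (trip (h 0)) (trip ∘ Fin.tail h) :
          Fin (m+1) → S × (A1 × A2) × (Z1 × Z2)) j.castSucc := by
    intro j
    rw [← Fin.succ_castSucc, Fin.cons_succ, hct]
  rw [chainW, Fin.prod_univ_succ]
  congr 1
  rw [chainW]
  apply Finset.prod_congr rfl
  intro j _
  rw [key j]
  have hn : t0 + 1 + ((j.val : ℕ) + 1) = t0 + 1 + 1 + j.val := by omega
  simp only [Fin.val_succ, hn, Fin.tail]

lemma chainW_norm (hπ1 : IsPolicy π1) (hπ2 : IsPolicy π2) :
    ∀ (m t0 : ℕ) (c : S × (A1 × A2) × (Z1 × Z2)),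
      ∑ h : Fin m → XX, chainW M π1 π2 t0 m c h = 1 := by
  intro m
  induction m with
  | zero =>
    intro t0 c
    rw [Fintype.sum_unique]
    simp [chainW]
  | succ m IH =>
    intro t0 c
    have hre : ∑ h : Fin (m+1) → XX, chainW M π1 π2 t0 (m+1) c h
        = ∑ p : XX × (Fin m → XX), chainW M π1 π2 t0 (m+1) c (Fin.cons p.1 p.2) :=
      (Equiv.sum_comp (consE m).symm (fun h => chainW M π1 π2 t0 (m+1) c h)).symm
    rw [hre, Fintype.sum_prod_type]
    have hb : ∀ x : XX, (∑ h' : Fin m → XX,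
        chainW M π1 π2 t0 (m+1) c (Fin.cons x h'))
        = M.P c.1 c.2.1 (x.1.1, x.1.2.1, x.1.2.2) *
          pf π1 π2 (t0+1) x.1.2 c.2.2 x.2.1 x.2.2 := by
      intro x
      have : ∀ h' : Fin m → XX, chainW M π1 π2 t0 (m+1) c (Fin.cons x h')
          = (M.P c.1 c.2.1 (x.1.1, x.1.2.1, x.1.2.2) *
             pf π1 π2 (t0+1) x.1.2 c.2.2 x.2.1 x.2.2) *
            chainW M π1 π2 (t0+1) m (trip x) h' := by
        intro h'
        rw [chainW_cons]
        simp [Fin.tail_cons]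
      rw [Finset.sum_congr rfl fun h' _ => this h', ← Finset.mul_sum,
        IH (t0+1) (trip x), mul_one]
    rw [Finset.sum_congr rfl fun x _ => hb x]
    exact step_sum M π1 π2 hπ1 hπ2 (t0+1) c.1 c.2.1 c.2.2

noncomputable def Saux (m : ℕ) (s : S) (a : A1 × A2) (z : Z1 × Z2) : ℝ :=
  ∑ sp : S, ∑ yp : Y1 × Y2, ∑ ap : A1 × A2, ∑ zp : Z1 × Z2,
    M.P s a (sp, yp.1, yp.2) *
    (π1 (M.T - 1 - m) yp.1 z.1 (ap.1, zp.1) * π2 (M.T - 1 - m) yp.2 z.2 (ap.2, zp.2)) *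
    Real.exp (lam * Qaux M π1 π2 lam m sp yp z ap zp)

lemma Saux_pos (hπ1 : IsPolicy π1) (hπ2 : IsPolicy π2) (m : ℕ) (s : S) (a : A1 × A2)
    (z : Z1 × Z2) : 0 < Saux M π1 π2 lam m s a z := by
  obtain ⟨w, hw⟩ := exists_pos_of_sum_one (M.P_nonneg s a) (M.P_sum s a)
  obtain ⟨q1, hq1⟩ := exists_pos_of_sum_one ((hπ1 (M.T-1-m)).1 w.2.1 z.1)
    ((hπ1 (M.T-1-m)).2 w.2.1 z.1)
  obtain ⟨q2, hq2⟩ := exists_pos_of_sum_one ((hπ2 (M.T-1-m)).1 w.2.2 z.2)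
    ((hπ2 (M.T-1-m)).2 w.2.2 z.2)
  have hnn : ∀ (sp : S) (yp : Y1 × Y2) (ap : A1 × A2) (zp : Z1 × Z2),
      0 ≤ M.P s a (sp, yp.1, yp.2) *
        (π1 (M.T - 1 - m) yp.1 z.1 (ap.1, zp.1) * π2 (M.T - 1 - m) yp.2 z.2 (ap.2, zp.2)) *
        Real.exp (lam * Qaux M π1 π2 lam m sp yp z ap zp) := by
    intro sp yp ap zp
    have h1 := M.P_nonneg s a (sp, yp.1, yp.2)
    have h2 := (hπ1 (M.T-1-m)).1 yp.1 z.1 (ap.1, zp.1)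
    have h3 := (hπ2 (M.T-1-m)).1 yp.2 z.2 (ap.2, zp.2)
    positivity
  rw [Saux]
  apply Finset.sum_pos' (fun sp _ => Finset.sum_nonneg fun yp _ =>
    Finset.sum_nonneg fun ap _ => Finset.sum_nonneg fun zp _ => hnn sp yp ap zp)
  refine ⟨w.1, Finset.mem_univ _, ?_⟩
  apply Finset.sum_pos' (fun yp _ => Finset.sum_nonneg fun ap _ =>
    Finset.sum_nonneg fun zp _ => hnn w.1 yp ap zp)
  refine ⟨w.2, Finset.mem_univ _, ?_⟩
  apply Finset.sum_pos' (fun ap _ => Finset.sum_nonneg fun zp _ => hnn w.1 w.2 ap zp)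
  refine ⟨(q1.1, q2.1), Finset.mem_univ _, ?_⟩
  apply Finset.sum_pos' (fun zp _ => hnn w.1 w.2 (q1.1, q2.1) zp)
  refine ⟨(q1.2, q2.2), Finset.mem_univ _, ?_⟩
  have hP : 0 < M.P s a (w.1, w.2.1, w.2.2) := by
    have : (w.1, w.2.1, w.2.2) = w := by simp
    rw [this]; exact hw
  have h1 : 0 < π1 (M.T - 1 - m) w.2.1 z.1 (q1.1, q1.2) := by
    have : (q1.1, q1.2) = q1 := by simp
    rw [this]; exact hq1
  have h2 : 0 < π2 (M.T - 1 - m) w.2.2 z.2 (q2.1, q2.2) := by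
    have : (q2.1, q2.2) = q2 := by simp
    rw [this]; exact hq2
  have := Real.exp_pos (lam * Qaux M π1 π2 lam m w.1 w.2 z (q1.1, q2.1) (q1.2, q2.2))
  positivity

lemma exp_Qaux_succ (hπ1 : IsPolicy π1) (hπ2 : IsPolicy π2) (hlam : 0 < lam)
    (m : ℕ) (s : S) (y : Y1 × Y2) (zm : Z1 × Z2) (a : A1 × A2) (z : Z1 × Z2) :
    Real.exp (lam * Qaux M π1 π2 lam (m+1) s y zm a z)
    = Real.exp (lam * M.r s a) * Saux M π1 π2 lam m s a z := by
  have hS := Saux_pos M π1 π2 lam hπ1 hπ2 m s a z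
  show Real.exp (lam * (M.r s a + (1/lam) * Real.log (Saux M π1 π2 lam m s a z))) = _
  rw [mul_add, ← mul_assoc, mul_one_div_cancel (ne_of_gt hlam), one_mul,
    Real.exp_add, Real.exp_log hS]

lemma backQ (hπ1 : IsPolicy π1) (hπ2 : IsPolicy π2) (hlam : 0 < lam) :
    ∀ (m t0 : ℕ), t0 + m + 1 = M.T →
      ∀ (c : S × (A1 × A2) × (Z1 × Z2)) (y : Y1 × Y2) (zm : Z1 × Z2),
      ∑ h : Fin m → XX,
        chainW M π1 π2 t0 m c h *
          Real.exp (lam * ∑ j : Fin m, M.r (h j).1.1 (h j).2.1)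
      = Real.exp (lam * (Qaux M π1 π2 lam m c.1 y zm c.2.1 c.2.2 - M.r c.1 c.2.1)) := by
  intro m
  induction m with
  | zero =>
    intro t0 hT c y zm
    rw [Fintype.sum_unique]
    simp [chainW, Qaux]
  | succ m IH =>
    intro t0 hT c y zm
    have hre : ∑ h : Fin (m+1) → XX,
        chainW M π1 π2 t0 (m+1) c h *
          Real.exp (lam * ∑ j : Fin (m+1), M.r (h j).1.1 (h j).2.1)
        = ∑ p : XX × (Fin m → XX),
            chainW M π1 π2 t0 (m+1) c (Fin.cons p.1 p.2) *
              Real.exp (lam * ∑ j : Fin (m+1),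
                M.r ((Fin.cons p.1 p.2 : Fin (m+1) → XX) j).1.1
                    ((Fin.cons p.1 p.2 : Fin (m+1) → XX) j).2.1) :=
      (Equiv.sum_comp (consE m).symm _).symm
    rw [hre, Fintype.sum_prod_type]
    have hbody : ∀ (x : XX) (h' : Fin m → XX),
        chainW M π1 π2 t0 (m+1) c (Fin.cons x h') *
          Real.exp (lam * ∑ j : Fin (m+1),
            M.r ((Fin.cons x h' : Fin (m+1) → XX) j).1.1
                ((Fin.cons x h' : Fin (m+1) → XX) j).2.1)
        = (M.P c.1 c.2.1 (x.1.1, x.1.2.1, x.1.2.2) *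
           pf π1 π2 (t0+1) x.1.2 c.2.2 x.2.1 x.2.2 *
           Real.exp (lam * M.r x.1.1 x.2.1)) *
          (chainW M π1 π2 (t0+1) m (trip x) h' *
           Real.exp (lam * ∑ j : Fin m, M.r (h' j).1.1 (h' j).2.1)) := by
      intro x h'
      rw [chainW_cons, Fin.sum_univ_succ]
      simp only [Fin.cons_zero, Fin.cons_succ, Fin.tail_cons]
      rw [mul_add, Real.exp_add]
      ring
    have hin : ∀ x : XX,
        (∑ h' : Fin m → XX,
          chainW M π1 π2 t0 (m+1) c (Fin.cons x h') *
            Real.exp (lam * ∑ j : Fin (m+1),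
              M.r ((Fin.cons x h' : Fin (m+1) → XX) j).1.1
                  ((Fin.cons x h' : Fin (m+1) → XX) j).2.1))
        = M.P c.1 c.2.1 (x.1.1, x.1.2.1, x.1.2.2) *
            pf π1 π2 (t0+1) x.1.2 c.2.2 x.2.1 x.2.2 *
            Real.exp (lam * Qaux M π1 π2 lam m x.1.1 x.1.2 c.2.2 x.2.1 x.2.2) := by
      intro x
      rw [Finset.sum_congr rfl fun h' _ => hbody x h', ← Finset.mul_sum,
        IH (t0+1) (by omega) (trip x) x.1.2 c.2.2]
      rw [mul_assoc, ← Real.exp_add]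
      congr 2
      show lam * M.r x.1.1 x.2.1 +
          lam * (Qaux M π1 π2 lam m x.1.1 x.1.2 c.2.2 x.2.1 x.2.2 - M.r x.1.1 x.2.1) = _
      ring
    rw [Finset.sum_congr rfl fun x _ => hin x]
    have hfin : ∑ x : XX,
        M.P c.1 c.2.1 (x.1.1, x.1.2.1, x.1.2.2) *
          pf π1 π2 (t0+1) x.1.2 c.2.2 x.2.1 x.2.2 *
          Real.exp (lam * Qaux M π1 π2 lam m x.1.1 x.1.2 c.2.2 x.2.1 x.2.2)
        = Saux M π1 π2 lam m c.1 c.2.1 c.2.2 := by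
      have ht : t0 + 1 = M.T - 1 - m := by omega
      rw [Saux, Fintype.sum_prod_type, Fintype.sum_prod_type]
      apply Finset.sum_congr rfl; intro sp _
      apply Finset.sum_congr rfl; intro yp _
      rw [Fintype.sum_prod_type]
      apply Finset.sum_congr rfl; intro ap _
      apply Finset.sum_congr rfl; intro zp _
      dsimp only
      rw [pf, ht]
    rw [hfin, mul_sub, Real.exp_sub,
      exp_Qaux_succ M π1 π2 lam hπ1 hπ2 hlam m c.1 y zm c.2.1 c.2.2,
      mul_div_cancel_left₀ _ (Real.exp_ne_zero _)]

lemma zpg_snoc (n : ℕ) (z0 : Z1 × Z2) (g' : Fin (n+1) → XX) (x : XX) (t : Fin (n+1)) :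
    zpg z0 (Fin.snoc g' x : Fin (n+1+1) → XX) t.castSucc = zpg z0 g' t := by
  rw [zpg, zpg]
  by_cases h : t.val = 0
  · rw [if_pos (by simpa using h), if_pos h]
  · rw [if_neg (by simpa using h), if_neg h]
    rw [show (⟨(t.castSucc).val - 1,
          lt_of_le_of_lt (Nat.sub_le _ _) (t.castSucc).isLt⟩ : Fin (n+1+1))
        = Fin.castSucc ⟨t.val - 1, lt_of_le_of_lt (Nat.sub_le _ _) t.isLt⟩ from rfl,
      Fin.snoc_castSucc]

lemma zpg_snoc_last (n : ℕ) (z0 : Z1 × Z2) (g' : Fin (n+1) → XX) (x : XX) :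
    zpg z0 (Fin.snoc g' x : Fin (n+1+1) → XX) (Fin.last (n+1))
    = (g' (Fin.last n)).2.2 := by
  rw [zpg, if_neg (by simp)]
  rw [show (⟨(Fin.last (n+1)).val - 1,
        lt_of_le_of_lt (Nat.sub_le _ _) (Fin.last (n+1)).isLt⟩ : Fin (n+1+1))
      = Fin.castSucc (Fin.last n) from rfl,
    Fin.snoc_castSucc]

lemma headW_snoc (n : ℕ) (z0 : Z1 × Z2) (g' : Fin (n+1) → XX) (x : XX) :
    headW M π1 π2 (n+1) z0 (Fin.snoc g' x)
    = headW M π1 π2 n z0 g' *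
      (M.P (g' (Fin.last n)).1.1 (g' (Fin.last n)).2.1 (x.1.1, x.1.2.1, x.1.2.2) *
       pf π1 π2 (n+1) x.1.2 (g' (Fin.last n)).2.2 x.2.1 x.2.2) := by
  have h0 : (Fin.snoc g' x : Fin (n+1+1) → XX) 0 = g' 0 := by
    rw [← Fin.castSucc_zero, Fin.snoc_castSucc]
  have hπ : (∏ t : Fin (n+1+1), pf π1 π2 t.val
        ((Fin.snoc g' x : Fin (n+1+1) → XX) t).1.2
        (zpg z0 (Fin.snoc g' x : Fin (n+1+1) → XX) t)
        ((Fin.snoc g' x : Fin (n+1+1) → XX) t).2.1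
        ((Fin.snoc g' x : Fin (n+1+1) → XX) t).2.2)
      = (∏ t : Fin (n+1), pf π1 π2 t.val (g' t).1.2 (zpg z0 g' t) (g' t).2.1 (g' t).2.2) *
        pf π1 π2 (n+1) x.1.2 (g' (Fin.last n)).2.2 x.2.1 x.2.2 := by
    rw [Fin.prod_univ_castSucc]
    congr 1
    · apply Finset.prod_congr rfl
      intro t _
      rw [Fin.snoc_castSucc, zpg_snoc]
      rfl
    · rw [Fin.snoc_last, zpg_snoc_last]
      rfl
  have hP : (∏ t : Fin (n+1),
        M.P ((Fin.snoc g' x : Fin (n+1+1) → XX) t.castSucc).1.1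
          ((Fin.snoc g' x : Fin (n+1+1) → XX) t.castSucc).2.1
          (((Fin.snoc g' x : Fin (n+1+1) → XX) t.succ).1.1,
           ((Fin.snoc g' x : Fin (n+1+1) → XX) t.succ).1.2.1,
           ((Fin.snoc g' x : Fin (n+1+1) → XX) t.succ).1.2.2))
      = (∏ t : Fin n, M.P (g' t.castSucc).1.1 (g' t.castSucc).2.1
          ((g' t.succ).1.1, (g' t.succ).1.2.1, (g' t.succ).1.2.2)) *
        M.P (g' (Fin.last n)).1.1 (g' (Fin.last n)).2.1 (x.1.1, x.1.2.1, x.1.2.2) := by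
    rw [Fin.prod_univ_castSucc]
    congr 1
    · apply Finset.prod_congr rfl
      intro t _
      rw [Fin.snoc_castSucc, Fin.succ_castSucc, Fin.snoc_castSucc]
    · rw [Fin.snoc_castSucc, Fin.succ_last, Fin.snoc_last]
  rw [headW, headW, h0, hπ, hP]
  ring

lemma fwd (n : ℕ) (H : S → (Y1 × Y2) → (Z1 × Z2) → (A1 × A2) → (Z1 × Z2) → ℝ) :
    (∑ z0 : Z1 × Z2, ∑ g : Fin (n+1) → XX,
      headW M π1 π2 n z0 g *
        H (g (Fin.last n)).1.1 (g (Fin.last n)).1.2 (zpg z0 g (Fin.last n))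
          (g (Fin.last n)).2.1 (g (Fin.last n)).2.2)
    = ∑ s : S, ∑ y : Y1 × Y2, ∑ zm : Z1 × Z2, ∑ a : A1 × A2, ∑ z : Z1 × Z2,
        zetaM M π1 π2 n s y zm * pf π1 π2 n y zm a z * H s y zm a z := by
  induction n generalizing H with
  | zero =>
    have hre : ∀ z0 : Z1 × Z2,
        (∑ g : Fin (0+1) → XX, headW M π1 π2 0 z0 g *
          H (g (Fin.last 0)).1.1 (g (Fin.last 0)).1.2 (zpg z0 g (Fin.last 0))
            (g (Fin.last 0)).2.1 (g (Fin.last 0)).2.2)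
        = ∑ x : XX, headW M π1 π2 0 z0 (fun _ => x) *
            H x.1.1 x.1.2 z0 x.2.1 x.2.2 := by
      intro z0
      refine (Equiv.sum_comp (Equiv.funUnique (Fin 1) XX).symm _).symm.trans ?_
      apply Finset.sum_congr rfl
      intro x _
      rfl
    rw [Finset.sum_congr rfl fun z0 _ => hre z0]
    have hb : ∀ (z0 : Z1 × Z2) (x : XX),
        headW M π1 π2 0 z0 (fun _ => x) * H x.1.1 x.1.2 z0 x.2.1 x.2.2
        = M.phi1 z0.1 * M.phi2 z0.2 * M.init (x.1.1, x.1.2.1, x.1.2.2) *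
          pf π1 π2 0 x.1.2 z0 x.2.1 x.2.2 * H x.1.1 x.1.2 z0 x.2.1 x.2.2 := by
      intro z0 x
      rw [headW, Fin.prod_univ_one, Fin.prod_univ_zero, mul_one]
      rw [show zpg z0 (fun _ : Fin (0+1) => x) 0 = z0 from rfl]
      norm_num
    rw [Finset.sum_congr rfl fun z0 _ =>
      Finset.sum_congr rfl fun x _ => hb z0 x]
    simp only [zetaM]
    simp only [← Fintype.sum_prod_type']
    apply Fintype.sum_equiv
      (⟨fun p => (p.2.1.1, (p.2.1.2, (p.1, p.2.2))),
        fun q => (q.2.2.1, ((q.1, q.2.1), q.2.2.2)),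
        fun p => rfl, fun q => rfl⟩ :
        (Z1 × Z2) × (S × Y1 × Y2) × (A1 × A2) × Z1 × Z2 ≃
        S × (Y1 × Y2) × (Z1 × Z2) × (A1 × A2) × Z1 × Z2)
    intro p
    dsimp only [Equiv.coe_fn_mk]
    ring
  | succ n IH =>
    set H' : S → (Y1 × Y2) → (Z1 × Z2) → (A1 × A2) → (Z1 × Z2) → ℝ :=
      fun s y zm a z => ∑ x : XX,
        M.P s a (x.1.1, x.1.2.1, x.1.2.2) *
          pf π1 π2 (n+1) x.1.2 z x.2.1 x.2.2 * H x.1.1 x.1.2 z x.2.1 x.2.2 with hH'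
    have hre : (∑ z0 : Z1 × Z2, ∑ g : Fin (n+1+1) → XX,
        headW M π1 π2 (n+1) z0 g *
          H (g (Fin.last (n+1))).1.1 (g (Fin.last (n+1))).1.2
            (zpg z0 g (Fin.last (n+1))) (g (Fin.last (n+1))).2.1
            (g (Fin.last (n+1))).2.2)
        = ∑ z0 : Z1 × Z2, ∑ g' : Fin (n+1) → XX, ∑ x : XX,
            headW M π1 π2 (n+1) z0 (Fin.snoc g' x) *
              H ((Fin.snoc g' x : Fin (n+1+1) → XX) (Fin.last (n+1))).1.1
                ((Fin.snoc g' x : Fin (n+1+1) → XX) (Fin.last (n+1))).1.2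
                (zpg z0 (Fin.snoc g' x : Fin (n+1+1) → XX) (Fin.last (n+1)))
                ((Fin.snoc g' x : Fin (n+1+1) → XX) (Fin.last (n+1))).2.1
                ((Fin.snoc g' x : Fin (n+1+1) → XX) (Fin.last (n+1))).2.2 := by
      apply Finset.sum_congr rfl; intro z0 _
      refine ((Equiv.sum_comp (snocE (n+1)).symm _).symm.trans ?_)
      rw [Fintype.sum_prod_type]
      apply Finset.sum_congr rfl; intro g' _
      apply Finset.sum_congr rfl; intro x _
      rfl
    rw [hre]
    have hb : ∀ (z0 : Z1 × Z2) (g' : Fin (n+1) → XX),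
        (∑ x : XX, headW M π1 π2 (n+1) z0 (Fin.snoc g' x) *
          H ((Fin.snoc g' x : Fin (n+1+1) → XX) (Fin.last (n+1))).1.1
            ((Fin.snoc g' x : Fin (n+1+1) → XX) (Fin.last (n+1))).1.2
            (zpg z0 (Fin.snoc g' x : Fin (n+1+1) → XX) (Fin.last (n+1)))
            ((Fin.snoc g' x : Fin (n+1+1) → XX) (Fin.last (n+1))).2.1
            ((Fin.snoc g' x : Fin (n+1+1) → XX) (Fin.last (n+1))).2.2)
        = headW M π1 π2 n z0 g' *
            H' (g' (Fin.last n)).1.1 (g' (Fin.last n)).1.2 (zpg z0 g' (Fin.last n))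
              (g' (Fin.last n)).2.1 (g' (Fin.last n)).2.2 := by
      intro z0 g'
      have h1 : ∀ x : XX,
          headW M π1 π2 (n+1) z0 (Fin.snoc g' x) *
            H ((Fin.snoc g' x : Fin (n+1+1) → XX) (Fin.last (n+1))).1.1
              ((Fin.snoc g' x : Fin (n+1+1) → XX) (Fin.last (n+1))).1.2
              (zpg z0 (Fin.snoc g' x : Fin (n+1+1) → XX) (Fin.last (n+1)))
              ((Fin.snoc g' x : Fin (n+1+1) → XX) (Fin.last (n+1))).2.1
              ((Fin.snoc g' x : Fin (n+1+1) → XX) (Fin.last (n+1))).2.2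
          = headW M π1 π2 n z0 g' *
              (M.P (g' (Fin.last n)).1.1 (g' (Fin.last n)).2.1 (x.1.1, x.1.2.1, x.1.2.2) *
               pf π1 π2 (n+1) x.1.2 (g' (Fin.last n)).2.2 x.2.1 x.2.2 *
               H x.1.1 x.1.2 (g' (Fin.last n)).2.2 x.2.1 x.2.2) := by
        intro x
        rw [headW_snoc, Fin.snoc_last, zpg_snoc_last]
        ring
      rw [Finset.sum_congr rfl fun x _ => h1 x, ← Finset.mul_sum]
    rw [Finset.sum_congr rfl fun z0 _ =>
      Finset.sum_congr rfl fun g' _ => hb z0 g']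
    rw [IH H']
    simp only [zetaM, hH']
    simp only [Finset.sum_mul, Finset.mul_sum]
    simp only [← Fintype.sum_prod_type']
    apply Fintype.sum_equiv
      (⟨fun p => (p.2.2.2.2.2.1.1, (p.2.2.2.2.2.1.2, (p.2.2.2.2.1, (p.2.2.2.2.2.2.1,
          (p.2.2.2.2.2.2.2, (p.1, (p.2.1, (p.2.2.2.1, p.2.2.1)))))))),
        fun q => (q.2.2.2.2.2.1, (q.2.2.2.2.2.2.1, (q.2.2.2.2.2.2.2.2, (q.2.2.2.2.2.2.2.1,
          (q.2.2.1, ((q.1, q.2.1), (q.2.2.2.1, q.2.2.2.2.1))))))),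
        fun p => rfl, fun q => rfl⟩ :
        (S × (Y1 × Y2) × (Z1 × Z2) × (A1 × A2) × (Z1 × Z2) ×
          (S × Y1 × Y2) × (A1 × A2) × Z1 × Z2) ≃
        (S × (Y1 × Y2) × (Z1 × Z2) × (A1 × A2) × (Z1 × Z2) × S × (Y1 × Y2) ×
          (A1 × A2) × Z1 × Z2))
    intro p
    dsimp only [Equiv.coe_fn_mk]
    simp only [pf]
    ring

/-- glue a prefix and a tail into a full trajectory function -/
def glueF {T k m : ℕ} (e : T = k + m) (g : Fin k → XX) (h : Fin m → XX) :
    Fin T → XX :=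
  fun i => Sum.elim g h (finSumFinEquiv.symm (Fin.cast e i))

lemma glueF_lo {T k m : ℕ} (e : T = k + m) (g : Fin k → XX) (h : Fin m → XX)
    (v : ℕ) (hv : v < T) (hk : v < k) : glueF e g h ⟨v, hv⟩ = g ⟨v, hk⟩ := by
  have : Fin.cast e ⟨v, hv⟩ = Fin.castAdd m (⟨v, hk⟩ : Fin k) := by
    apply Fin.ext; rfl
  rw [glueF, this, finSumFinEquiv_symm_apply_castAdd]; rfl

lemma glueF_hi {T k m : ℕ} (e : T = k + m) (g : Fin k → XX) (h : Fin m → XX)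
    (j : ℕ) (hj : j < m) (hv : k + j < T) : glueF e g h ⟨k + j, hv⟩ = h ⟨j, hj⟩ := by
  have : Fin.cast e ⟨k + j, hv⟩ = Fin.natAdd k (⟨j, hj⟩ : Fin m) := by
    apply Fin.ext; rfl
  rw [glueF, this, finSumFinEquiv_symm_apply_natAdd]; rfl

lemma glueF_lo' {T k m : ℕ} (e : T = k + m) (g : Fin k → XX) (h : Fin m → XX)
    (i : Fin T) (hk : i.val < k) : glueF e g h i = g ⟨i.val, hk⟩ := by
  obtain ⟨v, hv⟩ := i
  exact glueF_lo e g h v hv hk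

lemma glueF_hi' {T k m : ℕ} (e : T = k + m) (g : Fin k → XX) (h : Fin m → XX)
    (i : Fin T) (j : Fin m) (hij : i.val = k + j.val) : glueF e g h i = h j := by
  obtain ⟨v, hv⟩ := i
  subst hij
  rw [glueF_hi e g h j.val j.isLt hv]

/-- splitting the sum over trajectories -/
lemma sum_traj {k m : ℕ} (e : M.T = k + m) (F : Traj M → ℝ) :
    ∑ ω : Traj M, F ω
    = ∑ z0 : Z1 × Z2, ∑ g : Fin k → XX, ∑ h : Fin m → XX, F (z0, glueF e g h) := by
  calc ∑ ω : Traj M, F ω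
      = ∑ p : (Z1 × Z2) × ((Fin k → XX) × (Fin m → XX)),
          F (p.1, glueF e p.2.1 p.2.2) := by
        refine (Equiv.sum_comp (Equiv.prodCongr (Equiv.refl (Z1 × Z2))
          (((Equiv.sumArrowEquivProdArrow (Fin k) (Fin m) XX).symm.trans
            (Equiv.arrowCongr finSumFinEquiv (Equiv.refl XX))).trans
            (Equiv.arrowCongr (finCongr e.symm) (Equiv.refl XX)))) F).symm.trans ?_
        apply Finset.sum_congr rfl; intro p _
        rfl
    _ = ∑ z0 : Z1 × Z2, ∑ q : (Fin k → XX) × (Fin m → XX),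
          F (z0, glueF e q.1 q.2) := Fintype.sum_prod_type _
    _ = ∑ z0 : Z1 × Z2, ∑ g : Fin k → XX, ∑ h : Fin m → XX, F (z0, glueF e g h) :=
        Finset.sum_congr rfl fun z0 _ => Fintype.sum_prod_type _

lemma zprev_lo {n m : ℕ} (e : M.T = (n+1) + m) (z0 : Z1 × Z2)
    (g : Fin (n+1) → XX) (h : Fin m → XX) (t : Fin M.T) (hk : t.val < n+1) :
    zprev M (z0, glueF e g h) t = zpg z0 g ⟨t.val, hk⟩ := by
  rw [zprev, zpg]
  by_cases h0 : t.val = 0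
  · rw [if_pos h0, if_pos h0]
  · rw [if_neg h0, if_neg h0, zOf]
    show (glueF e g h _).2.2 = _
    rw [glueF_lo' e g h _ (show t.val - 1 < n+1 by omega)]

lemma zprev_hi {n m : ℕ} (e : M.T = (n+1) + m) (z0 : Z1 × Z2)
    (g : Fin (n+1) → XX) (h : Fin m → XX) (t : Fin M.T) (j : Fin m)
    (hij : t.val = n+1+j.val) :
    zprev M (z0, glueF e g h) t
    = ((Fin.cons (trip (g (Fin.last n))) (trip ∘ h) :
        Fin (m+1) → S × (A1 × A2) × (Z1 × Z2)) j.castSucc).2.2 := by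
  rw [zprev, if_neg (by omega), zOf]
  show (glueF e g h _).2.2 = _
  rcases j with ⟨jv, hjv⟩
  have hij' : t.val = n + 1 + jv := hij
  cases jv with
  | zero =>
    rw [glueF_lo' e g h _ (show t.val - 1 < n+1 by omega)]
    have : (⟨t.val - 1, show t.val - 1 < n+1 by omega⟩ : Fin (n+1)) = Fin.last n :=
      Fin.ext (by simp only [Fin.val_last]; omega)
    rw [this]
    rfl
  | succ jv =>
    rw [glueF_hi' e g h _ ⟨jv, by omega⟩
      (by simp only [Fin.val_mk]; omega)]
    have : (⟨jv+1, hjv⟩ : Fin m).castSucc = (⟨jv, by omega⟩ : Fin m).succ := rfl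
    rw [this, Fin.cons_succ]
    rfl

lemma trajProb_split {n m : ℕ} (e : M.T = (n+1) + m) (z0 : Z1 × Z2)
    (g : Fin (n+1) → XX) (h : Fin m → XX) :
    trajProb M π1 π2 (z0, glueF e g h)
    = headW M π1 π2 n z0 g * chainW M π1 π2 n m (trip (g (Fin.last n))) h := by
  have hidx1 : ∀ i : Fin (n+1),
      ((finCongr e.symm) (Fin.castAdd m i) : Fin M.T).val = i.val := fun i => rfl
  have hidx2 : ∀ j : Fin m,
      ((finCongr e.symm) (Fin.natAdd (n+1) j) : Fin M.T).val = n+1+j.val := fun j => rfl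
  have hf_lo : ∀ (t : Fin M.T) (i : Fin (n+1)), t.val = i.val →
      glueF e g h t = g i := by
    intro t i hti
    rw [glueF_lo' e g h t (by omega)]
    congr 1
    exact Fin.ext hti
  have hz_lo : ∀ (t : Fin M.T) (i : Fin (n+1)), t.val = i.val →
      zprev M (z0, glueF e g h) t = zpg z0 g i := by
    intro t i hti
    rw [zprev_lo M e z0 g h t (by omega)]
    congr 1
    exact Fin.ext hti
  have h0 : glueF e g h ⟨0, M.T_pos⟩ = g 0 := by
    rw [glueF_lo' e g h _ (Nat.succ_pos n)]
    exact congrArg g (Fin.ext (by simp))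
  have hπ : (∏ t : Fin M.T,
      (π1 t.val (yOf M (z0, glueF e g h) t).1 (zprev M (z0, glueF e g h) t).1
        ((aOf M (z0, glueF e g h) t).1, (zOf M (z0, glueF e g h) t).1) *
       π2 t.val (yOf M (z0, glueF e g h) t).2 (zprev M (z0, glueF e g h) t).2
        ((aOf M (z0, glueF e g h) t).2, (zOf M (z0, glueF e g h) t).2)))
    = (∏ t : Fin (n+1), pf π1 π2 t.val (g t).1.2 (zpg z0 g t) (g t).2.1 (g t).2.2) *
      (∏ j : Fin m, pf π1 π2 (n+1+j.val) (h j).1.2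
        ((Fin.cons (trip (g (Fin.last n))) (trip ∘ h) :
          Fin (m+1) → S × (A1 × A2) × (Z1 × Z2)) j.castSucc).2.2 (h j).2.1 (h j).2.2) := by
    rw [← Equiv.prod_comp (finCongr e.symm)
      (fun t : Fin M.T =>
        (π1 t.val (yOf M (z0, glueF e g h) t).1 (zprev M (z0, glueF e g h) t).1
          ((aOf M (z0, glueF e g h) t).1, (zOf M (z0, glueF e g h) t).1) *
         π2 t.val (yOf M (z0, glueF e g h) t).2 (zprev M (z0, glueF e g h) t).2
          ((aOf M (z0, glueF e g h) t).2, (zOf M (z0, glueF e g h) t).2))),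
      Fin.prod_univ_add]
    congr 1
    · apply Finset.prod_congr rfl
      intro i _
      dsimp only [yOf, aOf, zOf]
      rw [hz_lo _ i (hidx1 i)]
      rw [hf_lo _ i (hidx1 i), hidx1 i]
      rfl
    · apply Finset.prod_congr rfl
      intro j _
      dsimp only [yOf, aOf, zOf]
      rw [zprev_hi M e z0 g h _ j (hidx2 j)]
      rw [glueF_hi' e g h _ j (hidx2 j), hidx2 j]
      rfl
  have hP : (∏ t : Fin M.T,
      if ht : t.val + 1 < M.T then
        M.P (sOf M (z0, glueF e g h) t) (aOf M (z0, glueF e g h) t)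
          (sOf M (z0, glueF e g h) ⟨t.val + 1, ht⟩,
           (yOf M (z0, glueF e g h) ⟨t.val + 1, ht⟩).1,
           (yOf M (z0, glueF e g h) ⟨t.val + 1, ht⟩).2)
      else 1)
    = (∏ t : Fin n, M.P (g t.castSucc).1.1 (g t.castSucc).2.1
        ((g t.succ).1.1, (g t.succ).1.2.1, (g t.succ).1.2.2)) *
      (∏ j : Fin m, M.P ((Fin.cons (trip (g (Fin.last n))) (trip ∘ h) :
          Fin (m+1) → S × (A1 × A2) × (Z1 × Z2)) j.castSucc).1
        ((Fin.cons (trip (g (Fin.last n))) (trip ∘ h) :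
          Fin (m+1) → S × (A1 × A2) × (Z1 × Z2)) j.castSucc).2.1
        ((h j).1.1, (h j).1.2.1, (h j).1.2.2)) := by
    have hs_lo : ∀ (t : Fin M.T) (i : Fin (n+1)), t.val = i.val →
        sOf M (z0, glueF e g h) t = (g i).1.1 := by
      intro t i hti
      show (glueF e g h t).1.1 = _
      rw [hf_lo t i hti]
    have hy_lo : ∀ (t : Fin M.T) (i : Fin (n+1)), t.val = i.val →
        yOf M (z0, glueF e g h) t = (g i).1.2 := by
      intro t i hti
      show (glueF e g h t).1.2 = _
      rw [hf_lo t i hti]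
    have ha_lo : ∀ (t : Fin M.T) (i : Fin (n+1)), t.val = i.val →
        aOf M (z0, glueF e g h) t = (g i).2.1 := by
      intro t i hti
      show (glueF e g h t).2.1 = _
      rw [hf_lo t i hti]
    have hs_hi : ∀ (t : Fin M.T) (j : Fin m), t.val = n+1+j.val →
        sOf M (z0, glueF e g h) t = (h j).1.1 := by
      intro t j htj
      show (glueF e g h t).1.1 = _
      rw [glueF_hi' e g h t j htj]
    have hy_hi : ∀ (t : Fin M.T) (j : Fin m), t.val = n+1+j.val →
        yOf M (z0, glueF e g h) t = (h j).1.2 := by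
      intro t j htj
      show (glueF e g h t).1.2 = _
      rw [glueF_hi' e g h t j htj]
    have ha_hi : ∀ (t : Fin M.T) (j : Fin m), t.val = n+1+j.val →
        aOf M (z0, glueF e g h) t = (h j).2.1 := by
      intro t j htj
      show (glueF e g h t).2.1 = _
      rw [glueF_hi' e g h t j htj]
    rw [← Equiv.prod_comp (finCongr e.symm)
      (fun t : Fin M.T =>
        if ht : t.val + 1 < M.T then
          M.P (sOf M (z0, glueF e g h) t) (aOf M (z0, glueF e g h) t)
            (sOf M (z0, glueF e g h) ⟨t.val + 1, ht⟩,
             (yOf M (z0, glueF e g h) ⟨t.val + 1, ht⟩).1,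
             (yOf M (z0, glueF e g h) ⟨t.val + 1, ht⟩).2)
        else 1),
      Fin.prod_univ_add]
    have hL : (∏ i : Fin (n+1),
        if ht : ((finCongr e.symm) (Fin.castAdd m i) : Fin M.T).val + 1 < M.T then
          M.P (sOf M (z0, glueF e g h) ((finCongr e.symm) (Fin.castAdd m i)))
            (aOf M (z0, glueF e g h) ((finCongr e.symm) (Fin.castAdd m i)))
            (sOf M (z0, glueF e g h) ⟨_ + 1, ht⟩,
             (yOf M (z0, glueF e g h) ⟨_ + 1, ht⟩).1,
             (yOf M (z0, glueF e g h) ⟨_ + 1, ht⟩).2)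
        else 1)
        = (∏ t : Fin n, M.P (g t.castSucc).1.1 (g t.castSucc).2.1
            ((g t.succ).1.1, (g t.succ).1.2.1, (g t.succ).1.2.2)) *
          (if hm : 0 < m then
            M.P (g (Fin.last n)).1.1 (g (Fin.last n)).2.1
              ((h ⟨0, hm⟩).1.1, (h ⟨0, hm⟩).1.2.1, (h ⟨0, hm⟩).1.2.2)
          else 1) := by
      rw [Fin.prod_univ_castSucc]
      congr 1
      · apply Finset.prod_congr rfl
        intro t _
        rw [dif_pos (show ((finCongr e.symm) (Fin.castAdd m t.castSucc) :
            Fin M.T).val + 1 < M.T by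
          rw [hidx1 t.castSucc]
          have := t.isLt
          simp only [Fin.coe_castSucc]
          omega)]
        rw [hs_lo _ t.castSucc rfl, ha_lo _ t.castSucc rfl,
          hs_lo _ t.succ rfl, hy_lo _ t.succ rfl]
      · by_cases hm : 0 < m
        · rw [dif_pos (show ((finCongr e.symm) (Fin.castAdd m (Fin.last n)) :
              Fin M.T).val + 1 < M.T by
            rw [hidx1 (Fin.last n)]; simp only [Fin.val_last]; omega), dif_pos hm]
          rw [hs_lo _ (Fin.last n) rfl, ha_lo _ (Fin.last n) rfl,
            hs_hi _ ⟨0, hm⟩ rfl, hy_hi _ ⟨0, hm⟩ rfl]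
        · rw [dif_neg (show ¬ (((finCongr e.symm) (Fin.castAdd m (Fin.last n)) :
              Fin M.T).val + 1 < M.T) by
            rw [hidx1 (Fin.last n)]; simp only [Fin.val_last]; omega), dif_neg hm]
    rw [hL]
    have hR : (if hm : 0 < m then
          M.P (g (Fin.last n)).1.1 (g (Fin.last n)).2.1
            ((h ⟨0, hm⟩).1.1, (h ⟨0, hm⟩).1.2.1, (h ⟨0, hm⟩).1.2.2)
        else 1) *
        (∏ j : Fin m,
          if ht : ((finCongr e.symm) (Fin.natAdd (n+1) j) : Fin M.T).val + 1 < M.T then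
            M.P (sOf M (z0, glueF e g h) ((finCongr e.symm) (Fin.natAdd (n+1) j)))
              (aOf M (z0, glueF e g h) ((finCongr e.symm) (Fin.natAdd (n+1) j)))
              (sOf M (z0, glueF e g h) ⟨_ + 1, ht⟩,
               (yOf M (z0, glueF e g h) ⟨_ + 1, ht⟩).1,
               (yOf M (z0, glueF e g h) ⟨_ + 1, ht⟩).2)
          else 1)
        = ∏ j : Fin m, M.P ((Fin.cons (trip (g (Fin.last n))) (trip ∘ h) :
            Fin (m+1) → S × (A1 × A2) × (Z1 × Z2)) j.castSucc).1
          ((Fin.cons (trip (g (Fin.last n))) (trip ∘ h) :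
            Fin (m+1) → S × (A1 × A2) × (Z1 × Z2)) j.castSucc).2.1
          ((h j).1.1, (h j).1.2.1, (h j).1.2.2) := by
      cases m with
      | zero => simp
      | succ m' =>
        rw [dif_pos (Nat.succ_pos m'), Fin.prod_univ_castSucc, Fin.prod_univ_succ]
        rw [dif_neg (show ¬ (((finCongr e.symm) (Fin.natAdd (n+1) (Fin.last m')) :
          Fin M.T).val + 1 < M.T) by
            rw [hidx2 (Fin.last m')]; simp only [Fin.val_last]; omega), mul_one]
        congr 1
        apply Finset.prod_congr rfl
        intro j _
        rw [dif_pos (show ((finCongr e.symm) (Fin.natAdd (n+1) j.castSucc) :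
            Fin M.T).val + 1 < M.T by
          rw [hidx2 j.castSucc]; have := j.isLt; simp only [Fin.coe_castSucc]; omega)]
        rw [hs_hi _ j.castSucc (hidx2 j.castSucc), ha_hi _ j.castSucc (hidx2 j.castSucc),
          hs_hi _ j.succ rfl, hy_hi _ j.succ rfl]
        rw [show ((Fin.cons (trip (g (Fin.last n))) (trip ∘ h) :
            Fin (m'+1+1) → S × (A1 × A2) × (Z1 × Z2)) (Fin.castSucc j.succ)) =
            trip (h j.castSucc) by
          rw [← Fin.succ_castSucc, Fin.cons_succ]; rfl]
        rfl
    rw [mul_assoc, hR]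
  have hinit : M.init (sOf M (z0, glueF e g h) ⟨0, M.T_pos⟩,
      (yOf M (z0, glueF e g h) ⟨0, M.T_pos⟩).1,
      (yOf M (z0, glueF e g h) ⟨0, M.T_pos⟩).2)
      = M.init ((g 0).1.1, (g 0).1.2.1, (g 0).1.2.2) := by
    dsimp only [sOf, yOf]
    rw [h0]
  rw [trajProb, hinit, hπ, hP]
  rw [headW, chainW, Finset.prod_mul_distrib]
  ring

lemma reward_split {n m : ℕ} (e : M.T = (n+1) + m) (z0 : Z1 × Z2)
    (g : Fin (n+1) → XX) (h : Fin m → XX) :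
    (∑ τ : Fin M.T, if n ≤ τ.val then
        M.r (sOf M (z0, glueF e g h) τ) (aOf M (z0, glueF e g h) τ) else 0)
    = M.r (g (Fin.last n)).1.1 (g (Fin.last n)).2.1
      + ∑ j : Fin m, M.r (h j).1.1 (h j).2.1 := by
  have hf_lo : ∀ (t : Fin M.T) (i : Fin (n+1)), t.val = i.val →
      glueF e g h t = g i := by
    intro t i hti
    rw [glueF_lo' e g h t (by omega)]
    congr 1
    exact Fin.ext hti
  have hs_lo : ∀ (t : Fin M.T) (i : Fin (n+1)), t.val = i.val →
      sOf M (z0, glueF e g h) t = (g i).1.1 := by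
    intro t i hti
    show (glueF e g h t).1.1 = _
    rw [hf_lo t i hti]
  have ha_lo : ∀ (t : Fin M.T) (i : Fin (n+1)), t.val = i.val →
      aOf M (z0, glueF e g h) t = (g i).2.1 := by
    intro t i hti
    show (glueF e g h t).2.1 = _
    rw [hf_lo t i hti]
  rw [← Equiv.sum_comp (finCongr e.symm)
    (fun τ : Fin M.T => if n ≤ τ.val then
      M.r (sOf M (z0, glueF e g h) τ) (aOf M (z0, glueF e g h) τ) else 0),
    Fin.sum_univ_add]
  have hleft : (∑ i : Fin (n+1),
      if n ≤ ((finCongr e.symm) (Fin.castAdd m i) : Fin M.T).val then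
        M.r (sOf M (z0, glueF e g h) ((finCongr e.symm) (Fin.castAdd m i)))
          (aOf M (z0, glueF e g h) ((finCongr e.symm) (Fin.castAdd m i))) else 0)
      = M.r (g (Fin.last n)).1.1 (g (Fin.last n)).2.1 := by
    rw [Fin.sum_univ_castSucc]
    have h1 : ∀ t : Fin n,
        (if n ≤ ((finCongr e.symm) (Fin.castAdd m t.castSucc) : Fin M.T).val then
          M.r (sOf M (z0, glueF e g h) ((finCongr e.symm) (Fin.castAdd m t.castSucc)))
            (aOf M (z0, glueF e g h) ((finCongr e.symm) (Fin.castAdd m t.castSucc)))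
        else 0) = 0 := by
      intro t
      rw [if_neg]
      show ¬ (n ≤ t.castSucc.val)
      have := t.isLt
      simp only [Fin.coe_castSucc]
      omega
    rw [Finset.sum_congr rfl fun t _ => h1 t, Finset.sum_const_zero, zero_add]
    rw [if_pos (show n ≤ ((finCongr e.symm) (Fin.castAdd m (Fin.last n)) :
      Fin M.T).val from le_refl n)]
    rw [hs_lo _ (Fin.last n) rfl, ha_lo _ (Fin.last n) rfl]
  rw [hleft]
  congr 1
  apply Finset.sum_congr rfl
  intro j _
  rw [if_pos (show n ≤ ((finCongr e.symm) (Fin.natAdd (n+1) j) : Fin M.T).val from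
    by show n ≤ n+1+j.val; omega)]
  have hs : sOf M (z0, glueF e g h) ((finCongr e.symm) (Fin.natAdd (n+1) j))
      = (h j).1.1 := by
    show (glueF e g h _).1.1 = _
    rw [glueF_hi' e g h _ j rfl]
  have ha : aOf M (z0, glueF e g h) ((finCongr e.symm) (Fin.natAdd (n+1) j))
      = (h j).2.1 := by
    show (glueF e g h _).2.1 = _
    rw [glueF_hi' e g h _ j rfl]
  rw [hs, ha]

lemma event_split {n m : ℕ} (e : M.T = (n+1) + m) (hn : n < M.T) (z0 : Z1 × Z2)
    (g : Fin (n+1) → XX) (h : Fin m → XX) (s : S) (y : Y1 × Y2) (zm : Z1 × Z2)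
    (a : A1 × A2) (z : Z1 × Z2) :
    (sOf M (z0, glueF e g h) ⟨n, hn⟩ = s ∧ yOf M (z0, glueF e g h) ⟨n, hn⟩ = y ∧
     zprev M (z0, glueF e g h) ⟨n, hn⟩ = zm ∧ aOf M (z0, glueF e g h) ⟨n, hn⟩ = a ∧
     zOf M (z0, glueF e g h) ⟨n, hn⟩ = z)
    ↔ ((g (Fin.last n)).1.1 = s ∧ (g (Fin.last n)).1.2 = y ∧
       zpg z0 g (Fin.last n) = zm ∧ (g (Fin.last n)).2.1 = a ∧
       (g (Fin.last n)).2.2 = z) := by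
  have hfe : glueF e g h ⟨n, hn⟩ = g (Fin.last n) := by
    rw [glueF_lo' e g h _ (show (⟨n, hn⟩ : Fin M.T).val < n+1 from Nat.lt_succ_self n)]
    exact congrArg g (Fin.ext rfl)
  have hze : zprev M (z0, glueF e g h) ⟨n, hn⟩ = zpg z0 g (Fin.last n) := by
    rw [zprev_lo M e z0 g h _ (show (⟨n, hn⟩ : Fin M.T).val < n+1 from Nat.lt_succ_self n)]
    exact congrArg (zpg z0 g) (Fin.ext rfl)
  rw [show sOf M (z0, glueF e g h) ⟨n, hn⟩ = (glueF e g h ⟨n, hn⟩).1.1 from rfl,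
    show yOf M (z0, glueF e g h) ⟨n, hn⟩ = (glueF e g h ⟨n, hn⟩).1.2 from rfl,
    show aOf M (z0, glueF e g h) ⟨n, hn⟩ = (glueF e g h ⟨n, hn⟩).2.1 from rfl,
    show zOf M (z0, glueF e g h) ⟨n, hn⟩ = (glueF e g h ⟨n, hn⟩).2.2 from rfl,
    hfe, hze]

end AuxDev

/-- **The risk-seeking centralized Q-function computes the conditional entropic
value of the reward-to-go.**  For every (0-indexed) time n < T and every tuple
(s,y,z₋,a,z) of positive probability,
exp(λ·Q^π_n(s,y,z₋,a,z)) = E^π[exp(λ·Σ_{τ=n}^{T−1} r(S_τ,A_τ)) | S_n=s, Y_n=y,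
Z_{n−1}=z₋, A_n=a, Z_n=z]; consequently
J^λ_{n:T}(π) = (1/λ)·log E^π[exp(λ·Σ_{τ=n}^{T−1} r(S_τ,A_τ))]. -/
theorem Q_is_conditional_entropic_reward_to_go
    (M : DecPOMDP S Y1 Y2 A1 A2 Z1 Z2)
    (π1 : ℕ → Y1 → Z1 → A1 × Z1 → ℝ) (π2 : ℕ → Y2 → Z2 → A2 × Z2 → ℝ)
    (hπ1 : IsPolicy π1) (hπ2 : IsPolicy π2)
    (lam : ℝ) (hlam : 0 < lam) :
    (∀ (n : ℕ) (hn : n < M.T) (s : S) (y : Y1 × Y2) (zm : Z1 × Z2)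
        (a : A1 × A2) (z : Z1 × Z2),
      0 < prEvent M π1 π2 (fun ω =>
        sOf M ω ⟨n, hn⟩ = s ∧ yOf M ω ⟨n, hn⟩ = y ∧ zprev M ω ⟨n, hn⟩ = zm ∧
        aOf M ω ⟨n, hn⟩ = a ∧ zOf M ω ⟨n, hn⟩ = z) →
      Real.exp (lam * Qfun M π1 π2 lam n s y zm a z)
        = (∑ ω : Traj M,
            if sOf M ω ⟨n, hn⟩ = s ∧ yOf M ω ⟨n, hn⟩ = y ∧ zprev M ω ⟨n, hn⟩ = zm ∧
               aOf M ω ⟨n, hn⟩ = a ∧ zOf M ω ⟨n, hn⟩ = z then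
              trajProb M π1 π2 ω *
                Real.exp (lam * ∑ τ : Fin M.T,
                  if n ≤ τ.val then M.r (sOf M ω τ) (aOf M ω τ) else 0)
            else 0) /
          prEvent M π1 π2 (fun ω =>
            sOf M ω ⟨n, hn⟩ = s ∧ yOf M ω ⟨n, hn⟩ = y ∧ zprev M ω ⟨n, hn⟩ = zm ∧
            aOf M ω ⟨n, hn⟩ = a ∧ zOf M ω ⟨n, hn⟩ = z)) ∧
    (∀ n : ℕ, n < M.T →
      Jrisk M π1 π2 lam n
        = (1/lam) * Real.log (∑ ω : Traj M,
            trajProb M π1 π2 ω *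
            Real.exp (lam * ∑ τ : Fin M.T,
              if n ≤ τ.val then M.r (sOf M ω τ) (aOf M ω τ) else 0))) := by
  constructor
  · -- part 1
    intro n hn s y zm a z hpos
    have e : M.T = (n+1) + (M.T - 1 - n) := by omega
    have hden : prEvent M π1 π2 (fun ω =>
        sOf M ω ⟨n, hn⟩ = s ∧ yOf M ω ⟨n, hn⟩ = y ∧ zprev M ω ⟨n, hn⟩ = zm ∧
        aOf M ω ⟨n, hn⟩ = a ∧ zOf M ω ⟨n, hn⟩ = z)
        = ∑ z0 : Z1 × Z2, ∑ g : Fin (n+1) → (S × (Y1 × Y2)) × ((A1 × A2) × (Z1 × Z2)),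
          (if (g (Fin.last n)).1.1 = s ∧ (g (Fin.last n)).1.2 = y ∧
              zpg z0 g (Fin.last n) = zm ∧ (g (Fin.last n)).2.1 = a ∧
              (g (Fin.last n)).2.2 = z then headW M π1 π2 n z0 g else 0) := by
      rw [prEvent, sum_traj M e]
      apply Finset.sum_congr rfl; intro z0 _
      apply Finset.sum_congr rfl; intro g _
      by_cases hE : (g (Fin.last n)).1.1 = s ∧ (g (Fin.last n)).1.2 = y ∧
          zpg z0 g (Fin.last n) = zm ∧ (g (Fin.last n)).2.1 = a ∧
          (g (Fin.last n)).2.2 = z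
      · refine (Finset.sum_congr rfl (fun h _ =>
          if_pos ((event_split M e hn z0 g h s y zm a z).mpr hE))).trans ?_
        refine (Finset.sum_congr rfl (fun h _ =>
          trajProb_split M π1 π2 e z0 g h)).trans ?_
        rw [← Finset.mul_sum,
          chainW_norm M π1 π2 hπ1 hπ2 (M.T - 1 - n) n (trip (g (Fin.last n))),
          mul_one, if_pos hE]
      · refine (Finset.sum_congr rfl (fun h _ =>
          if_neg (fun hx => hE ((event_split M e hn z0 g h s y zm a z).mp hx)))).trans ?_
        rw [Finset.sum_const_zero, if_neg hE]
    have hnum : (∑ ω : Traj M,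
        if sOf M ω ⟨n, hn⟩ = s ∧ yOf M ω ⟨n, hn⟩ = y ∧ zprev M ω ⟨n, hn⟩ = zm ∧
           aOf M ω ⟨n, hn⟩ = a ∧ zOf M ω ⟨n, hn⟩ = z then
          trajProb M π1 π2 ω *
            Real.exp (lam * ∑ τ : Fin M.T,
              if n ≤ τ.val then M.r (sOf M ω τ) (aOf M ω τ) else 0)
        else 0)
        = Real.exp (lam * Qfun M π1 π2 lam n s y zm a z) *
          ∑ z0 : Z1 × Z2, ∑ g : Fin (n+1) → (S × (Y1 × Y2)) × ((A1 × A2) × (Z1 × Z2)),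
          (if (g (Fin.last n)).1.1 = s ∧ (g (Fin.last n)).1.2 = y ∧
              zpg z0 g (Fin.last n) = zm ∧ (g (Fin.last n)).2.1 = a ∧
              (g (Fin.last n)).2.2 = z then headW M π1 π2 n z0 g else 0) := by
      rw [sum_traj M e, Finset.mul_sum]
      apply Finset.sum_congr rfl; intro z0 _
      rw [Finset.mul_sum]
      apply Finset.sum_congr rfl; intro g _
      by_cases hE : (g (Fin.last n)).1.1 = s ∧ (g (Fin.last n)).1.2 = y ∧
          zpg z0 g (Fin.last n) = zm ∧ (g (Fin.last n)).2.1 = a ∧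
          (g (Fin.last n)).2.2 = z
      · refine (Finset.sum_congr rfl (fun h _ =>
          if_pos ((event_split M e hn z0 g h s y zm a z).mpr hE))).trans ?_
        refine (Finset.sum_congr rfl (fun h _ =>
          show trajProb M π1 π2 (z0, glueF e g h) *
              Real.exp (lam * ∑ τ : Fin M.T,
                if n ≤ τ.val then M.r (sOf M (z0, glueF e g h) τ)
                  (aOf M (z0, glueF e g h) τ) else 0)
            = headW M π1 π2 n z0 g * chainW M π1 π2 n (M.T - 1 - n)
                (trip (g (Fin.last n))) h *
              Real.exp (lam * (M.r (g (Fin.last n)).1.1 (g (Fin.last n)).2.1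
                + ∑ j : Fin (M.T - 1 - n), M.r (h j).1.1 (h j).2.1))
            by rw [trajProb_split M π1 π2 e z0 g h, reward_split M e z0 g h])).trans ?_
        rw [if_pos hE]
        obtain ⟨h1, h2, h3, h4, h5⟩ := hE
        have hback := backQ M π1 π2 lam hπ1 hπ2 hlam (M.T - 1 - n) n (by omega)
          (trip (g (Fin.last n))) y zm
        calc (∑ h : Fin (M.T - 1 - n) → (S × (Y1 × Y2)) × ((A1 × A2) × (Z1 × Z2)),
              headW M π1 π2 n z0 g * chainW M π1 π2 n (M.T - 1 - n)
                (trip (g (Fin.last n))) h *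
              Real.exp (lam * (M.r (g (Fin.last n)).1.1 (g (Fin.last n)).2.1
                + ∑ j : Fin (M.T - 1 - n), M.r (h j).1.1 (h j).2.1)))
            = ∑ h : Fin (M.T - 1 - n) → (S × (Y1 × Y2)) × ((A1 × A2) × (Z1 × Z2)),
              (headW M π1 π2 n z0 g *
                Real.exp (lam * M.r (g (Fin.last n)).1.1 (g (Fin.last n)).2.1)) *
              (chainW M π1 π2 n (M.T - 1 - n) (trip (g (Fin.last n))) h *
                Real.exp (lam * ∑ j : Fin (M.T - 1 - n), M.r (h j).1.1 (h j).2.1)) := by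
              apply Finset.sum_congr rfl; intro h _
              rw [mul_add, Real.exp_add]
              ring
          _ = (headW M π1 π2 n z0 g *
                Real.exp (lam * M.r (g (Fin.last n)).1.1 (g (Fin.last n)).2.1)) *
              Real.exp (lam * (Qaux M π1 π2 lam (M.T - 1 - n) (trip (g (Fin.last n))).1
                y zm (trip (g (Fin.last n))).2.1 (trip (g (Fin.last n))).2.2
                - M.r (trip (g (Fin.last n))).1 (trip (g (Fin.last n))).2.1)) := by
              rw [← Finset.mul_sum, hback]
          _ = Real.exp (lam * Qfun M π1 π2 lam n s y zm a z) * headW M π1 π2 n z0 g := by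
              simp only [trip]
              rw [h1, h4, h5]
              rw [show Qfun M π1 π2 lam n = Qaux M π1 π2 lam (M.T - 1 - n) from rfl]
              rw [mul_assoc, ← Real.exp_add]
              rw [show lam * M.r s a +
                  lam * (Qaux M π1 π2 lam (M.T - 1 - n) s y zm a z - M.r s a)
                  = lam * Qaux M π1 π2 lam (M.T - 1 - n) s y zm a z by ring]
              ring
      · refine (Finset.sum_congr rfl (fun h _ =>
          if_neg (fun hx => hE ((event_split M e hn z0 g h s y zm a z).mp hx)))).trans ?_
        rw [Finset.sum_const_zero, if_neg hE, mul_zero]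
    rw [hnum, hden]
    have hDpos : 0 < ∑ z0 : Z1 × Z2,
        ∑ g : Fin (n+1) → (S × (Y1 × Y2)) × ((A1 × A2) × (Z1 × Z2)),
          (if (g (Fin.last n)).1.1 = s ∧ (g (Fin.last n)).1.2 = y ∧
              zpg z0 g (Fin.last n) = zm ∧ (g (Fin.last n)).2.1 = a ∧
              (g (Fin.last n)).2.2 = z then headW M π1 π2 n z0 g else 0) := by
      rw [← hden]; exact hpos
    rw [mul_div_assoc, div_self (ne_of_gt hDpos), mul_one]
  · -- part 2
    intro n hn
    have e : M.T = (n+1) + (M.T - 1 - n) := by omega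
    have key : (∑ ω : Traj M,
        trajProb M π1 π2 ω *
          Real.exp (lam * ∑ τ : Fin M.T,
            if n ≤ τ.val then M.r (sOf M ω τ) (aOf M ω τ) else 0))
        = ∑ s : S, ∑ y : Y1 × Y2, ∑ zm : Z1 × Z2, ∑ a : A1 × A2, ∑ z : Z1 × Z2,
            zetaM M π1 π2 n s y zm *
            (π1 n y.1 zm.1 (a.1, z.1) * π2 n y.2 zm.2 (a.2, z.2)) *
            Real.exp (lam * Qfun M π1 π2 lam n s y zm a z) := by
      rw [sum_traj M e]
      have hmid : ∀ (z0 : Z1 × Z2)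
          (g : Fin (n+1) → (S × (Y1 × Y2)) × ((A1 × A2) × (Z1 × Z2))),
          (∑ h : Fin (M.T - 1 - n) → (S × (Y1 × Y2)) × ((A1 × A2) × (Z1 × Z2)),
            trajProb M π1 π2 (z0, glueF e g h) *
              Real.exp (lam * ∑ τ : Fin M.T,
                if n ≤ τ.val then M.r (sOf M (z0, glueF e g h) τ)
                  (aOf M (z0, glueF e g h) τ) else 0))
          = headW M π1 π2 n z0 g *
            Real.exp (lam * Qfun M π1 π2 lam n (g (Fin.last n)).1.1
              (g (Fin.last n)).1.2 (zpg z0 g (Fin.last n)) (g (Fin.last n)).2.1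
              (g (Fin.last n)).2.2) := by
        intro z0 g
        have hback := backQ M π1 π2 lam hπ1 hπ2 hlam (M.T - 1 - n) n (by omega)
          (trip (g (Fin.last n))) (g (Fin.last n)).1.2 (zpg z0 g (Fin.last n))
        calc (∑ h : Fin (M.T - 1 - n) → (S × (Y1 × Y2)) × ((A1 × A2) × (Z1 × Z2)),
              trajProb M π1 π2 (z0, glueF e g h) *
                Real.exp (lam * ∑ τ : Fin M.T,
                  if n ≤ τ.val then M.r (sOf M (z0, glueF e g h) τ)
                    (aOf M (z0, glueF e g h) τ) else 0))
            = ∑ h : Fin (M.T - 1 - n) → (S × (Y1 × Y2)) × ((A1 × A2) × (Z1 × Z2)),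
              (headW M π1 π2 n z0 g *
                Real.exp (lam * M.r (g (Fin.last n)).1.1 (g (Fin.last n)).2.1)) *
              (chainW M π1 π2 n (M.T - 1 - n) (trip (g (Fin.last n))) h *
                Real.exp (lam * ∑ j : Fin (M.T - 1 - n), M.r (h j).1.1 (h j).2.1)) := by
              apply Finset.sum_congr rfl; intro h _
              rw [trajProb_split M π1 π2 e z0 g h, reward_split M e z0 g h,
                mul_add, Real.exp_add]
              ring
          _ = (headW M π1 π2 n z0 g *
                Real.exp (lam * M.r (g (Fin.last n)).1.1 (g (Fin.last n)).2.1)) *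
              Real.exp (lam * (Qaux M π1 π2 lam (M.T - 1 - n) (trip (g (Fin.last n))).1
                (g (Fin.last n)).1.2 (zpg z0 g (Fin.last n))
                (trip (g (Fin.last n))).2.1 (trip (g (Fin.last n))).2.2
                - M.r (trip (g (Fin.last n))).1 (trip (g (Fin.last n))).2.1)) := by
              rw [← Finset.mul_sum, hback]
          _ = headW M π1 π2 n z0 g *
              Real.exp (lam * Qfun M π1 π2 lam n (g (Fin.last n)).1.1
                (g (Fin.last n)).1.2 (zpg z0 g (Fin.last n)) (g (Fin.last n)).2.1
                (g (Fin.last n)).2.2) := by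
              simp only [trip]
              rw [show Qfun M π1 π2 lam n = Qaux M π1 π2 lam (M.T - 1 - n) from rfl]
              rw [mul_assoc, ← Real.exp_add]
              congr 2
              ring
      rw [Finset.sum_congr rfl (fun z0 _ =>
        Finset.sum_congr rfl (fun g _ => hmid z0 g))]
      have := fwd M π1 π2 n (fun s y zm a z =>
        Real.exp (lam * Qfun M π1 π2 lam n s y zm a z))
      rw [this]
      apply Finset.sum_congr rfl; intro s _
      apply Finset.sum_congr rfl; intro y _
      apply Finset.sum_congr rfl; intro zm _
      apply Finset.sum_congr rfl; intro a _
      apply Finset.sum_congr rfl; intro z _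
      rw [pf]
    rw [Jrisk, key]
end

section
/- Convexity of the entropic risk map for positive risk parameter: for every λ > 0, every X, Y : Ω → ℝ, and every α ∈ [0,1], ρ_λ(α·X + (1−α)·Y) ≤ α·ρ_λ(X) + (1−α)·ρ_λ(Y), where α·X + (1−α)·Y denotes the pointwise convex combination. -/
open Finset

/-- `p` is a probability mass function on the finite type `Ω`. -/
def IsPMF {Ω : Type} [Fintype Ω] (p : Ω → ℝ) : Prop :=
  (∀ ω, 0 ≤ p ω) ∧ ∑ ω, p ω = 1

/-- The entropic risk value ρ_λ(X) = (1/λ)·log(Σ_ω p(ω)·exp(λ·X(ω))). -/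
noncomputable def entRisk {Ω : Type} [Fintype Ω] (p : Ω → ℝ) (lam : ℝ) (X : Ω → ℝ) : ℝ :=
  (1/lam) * Real.log (∑ ω, p ω * Real.exp (lam * X ω))

/-- The expectation E[X] = Σ_ω p(ω)·X(ω). -/
noncomputable def pmfExp {Ω : Type} [Fintype Ω] (p : Ω → ℝ) (X : Ω → ℝ) : ℝ :=
  ∑ ω, p ω * X ω

/-- **Convexity of the entropic risk map for positive risk parameter**: for every
λ > 0, X, Y : Ω → ℝ and α ∈ [0,1],
ρ_λ(α·X + (1−α)·Y) ≤ α·ρ_λ(X) + (1−α)·ρ_λ(Y). -/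
theorem entRisk_convex_of_pos
    {Ω : Type} [Fintype Ω] [Nonempty Ω] (p : Ω → ℝ) (hp : IsPMF p)
    (lam : ℝ) (hlam : 0 < lam) (X Y : Ω → ℝ) (α : ℝ) (hα : α ∈ Set.Icc (0:ℝ) 1) :
    entRisk p lam (fun ω => α * X ω + (1 - α) * Y ω)
      ≤ α * entRisk p lam X + (1 - α) * entRisk p lam Y := by
  obtain ⟨hp0, hp1⟩ := hp
  obtain ⟨hα0, hα1⟩ := hα
  set a : Ω → ℝ := fun ω => Real.exp (lam * X ω) with ha
  set b : Ω → ℝ := fun ω => Real.exp (lam * Y ω) with hb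
  have hapos : ∀ ω, 0 < a ω := fun ω => Real.exp_pos _
  have hbpos : ∀ ω, 0 < b ω := fun ω => Real.exp_pos _
  obtain ⟨ω₀, hω₀⟩ : ∃ ω, 0 < p ω := by
    by_contra h
    push_neg at h
    have : (∑ ω, p ω) ≤ 0 := Finset.sum_nonpos (fun ω _ => h ω)
    linarith
  set A := ∑ ω, p ω * a ω with hA
  set B := ∑ ω, p ω * b ω with hB
  have hApos : 0 < A := by
    apply Finset.sum_pos' (fun ω _ => mul_nonneg (hp0 ω) (hapos ω).le)
    exact ⟨ω₀, Finset.mem_univ _, mul_pos hω₀ (hapos ω₀)⟩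
  have hBpos : 0 < B := by
    apply Finset.sum_pos' (fun ω _ => mul_nonneg (hp0 ω) (hbpos ω).le)
    exact ⟨ω₀, Finset.mem_univ _, mul_pos hω₀ (hbpos ω₀)⟩
  set S := ∑ ω, p ω * Real.exp (lam * (α * X ω + (1 - α) * Y ω)) with hS
  have hSpos : 0 < S := by
    apply Finset.sum_pos' (fun ω _ => mul_nonneg (hp0 ω) (Real.exp_pos _).le)
    exact ⟨ω₀, Finset.mem_univ _, mul_pos hω₀ (Real.exp_pos _)⟩
  have hC : 0 < A ^ α * B ^ (1 - α) :=
    mul_pos (Real.rpow_pos_of_pos hApos _) (Real.rpow_pos_of_pos hBpos _)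
  have key : S ≤ A ^ α * B ^ (1 - α) := by
    have step : ∀ ω ∈ Finset.univ, p ω * Real.exp (lam * (α * X ω + (1 - α) * Y ω))
        ≤ A ^ α * B ^ (1 - α) * (p ω * (α * (a ω / A) + (1 - α) * (b ω / B))) := by
      intro ω _
      have hexp : Real.exp (lam * (α * X ω + (1 - α) * Y ω)) = a ω ^ α * b ω ^ (1 - α) := by
        rw [ha, hb]
        simp only
        rw [← Real.exp_mul, ← Real.exp_mul, ← Real.exp_add]
        ring_nf
      have hsplit : a ω ^ α * b ω ^ (1 - α)
          = A ^ α * B ^ (1 - α) * ((a ω / A) ^ α * (b ω / B) ^ (1 - α)) := by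
        rw [Real.div_rpow (hapos ω).le hApos.le, Real.div_rpow (hbpos ω).le hBpos.le]
        field_simp
      have hgm : (a ω / A) ^ α * (b ω / B) ^ (1 - α)
          ≤ α * (a ω / A) + (1 - α) * (b ω / B) :=
        Real.geom_mean_le_arith_mean2_weighted hα0 (by linarith)
          (div_nonneg (hapos ω).le hApos.le) (div_nonneg (hbpos ω).le hBpos.le)
          (by ring)
      calc p ω * Real.exp (lam * (α * X ω + (1 - α) * Y ω))
          = p ω * (A ^ α * B ^ (1 - α) * ((a ω / A) ^ α * (b ω / B) ^ (1 - α))) := by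
            rw [hexp, hsplit]
        _ ≤ p ω * (A ^ α * B ^ (1 - α) * (α * (a ω / A) + (1 - α) * (b ω / B))) := by
            apply mul_le_mul_of_nonneg_left _ (hp0 ω)
            exact mul_le_mul_of_nonneg_left hgm hC.le
        _ = A ^ α * B ^ (1 - α) * (p ω * (α * (a ω / A) + (1 - α) * (b ω / B))) := by ring
    have hsum1 : ∑ ω, p ω * (α * (a ω / A) + (1 - α) * (b ω / B)) = 1 := by
      have heq : ∀ ω, p ω * (α * (a ω / A) + (1 - α) * (b ω / B))
          = (α / A) * (p ω * a ω) + ((1 - α) / B) * (p ω * b ω) := by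
        intro ω; field_simp
      simp_rw [heq, Finset.sum_add_distrib, ← Finset.mul_sum, ← hA, ← hB]
      field_simp
      ring
    calc S ≤ ∑ ω, A ^ α * B ^ (1 - α) * (p ω * (α * (a ω / A) + (1 - α) * (b ω / B))) :=
          Finset.sum_le_sum step
      _ = A ^ α * B ^ (1 - α) * ∑ ω, p ω * (α * (a ω / A) + (1 - α) * (b ω / B)) := by
          rw [Finset.mul_sum]
      _ = A ^ α * B ^ (1 - α) := by rw [hsum1, mul_one]
  have hlog : Real.log S ≤ α * Real.log A + (1 - α) * Real.log B := by
    calc Real.log S ≤ Real.log (A ^ α * B ^ (1 - α)) := Real.log_le_log hSpos key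
      _ = α * Real.log A + (1 - α) * Real.log B := by
          rw [Real.log_mul (Real.rpow_pos_of_pos hApos _).ne' (Real.rpow_pos_of_pos hBpos _).ne',
            Real.log_rpow hApos, Real.log_rpow hBpos]
  have hmul := mul_le_mul_of_nonneg_left hlog (le_of_lt (by positivity : (0:ℝ) < 1/lam))
  simp only [entRisk, ← hS, ← hA, ← hB]
  calc (1/lam) * Real.log S ≤ (1/lam) * (α * Real.log A + (1 - α) * Real.log B) := hmul
    _ = α * ((1/lam) * Real.log A) + (1 - α) * ((1/lam) * Real.log B) := by ring
end

section
/- Concavity of the entropic risk map for negative risk parameter: for every λ < 0, every X, Y : Ω → ℝ, and every α ∈ [0,1], ρ_λ(α·X + (1−α)·Y) ≥ α·ρ_λ(X) + (1−α)·ρ_λ(Y), where α·X + (1−α)·Y denotes the pointwise convex combination. -/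
open Finset

lemma sum_exp_pos {Ω : Type} [Fintype Ω] (p : Ω → ℝ) (hp : IsPMF p)
    (lam : ℝ) (X : Ω → ℝ) : 0 < ∑ ω, p ω * Real.exp (lam * X ω) := by
  obtain ⟨hp0, hp1⟩ := hp
  have : ∃ ω ∈ Finset.univ, 0 < p ω := by
    by_contra h
    push_neg at h
    have : ∑ ω, p ω ≤ 0 := Finset.sum_nonpos (fun ω _ => h ω (Finset.mem_univ ω))
    linarith
  obtain ⟨ω₀, _, hω₀⟩ := this
  refine Finset.sum_pos' (fun ω _ => mul_nonneg (hp0 ω) (Real.exp_pos _).le) ?_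
  exact ⟨ω₀, Finset.mem_univ ω₀, mul_pos hω₀ (Real.exp_pos _)⟩

/-- **Concavity of the entropic risk map for negative risk parameter**: for every
λ < 0, X, Y : Ω → ℝ and α ∈ [0,1],
ρ_λ(α·X + (1−α)·Y) ≥ α·ρ_λ(X) + (1−α)·ρ_λ(Y). -/
theorem entRisk_concave_of_neg
    {Ω : Type} [Fintype Ω] [Nonempty Ω] (p : Ω → ℝ) (hp : IsPMF p)
    (lam : ℝ) (hlam : lam < 0) (X Y : Ω → ℝ) (α : ℝ) (hα : α ∈ Set.Icc (0:ℝ) 1) :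
    α * entRisk p lam X + (1 - α) * entRisk p lam Y
      ≤ entRisk p lam (fun ω => α * X ω + (1 - α) * Y ω) := by
  obtain ⟨hα0, hα1⟩ := hα
  have hα1' : (0:ℝ) ≤ 1 - α := by linarith
  set Sx := ∑ ω, p ω * Real.exp (lam * X ω) with hSx
  set Sy := ∑ ω, p ω * Real.exp (lam * Y ω) with hSy
  set Sz := ∑ ω, p ω * Real.exp (lam * (α * X ω + (1 - α) * Y ω)) with hSz
  have hSxpos : 0 < Sx := sum_exp_pos p hp lam X
  have hSypos : 0 < Sy := sum_exp_pos p hp lam Y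
  have hSzpos : 0 < Sz := sum_exp_pos p hp lam _
  -- Hölder: Sz ≤ Sx^α * Sy^(1-α)
  have key : Sz ≤ Sx ^ α * Sy ^ (1 - α) := by
    have hmain : Sz / (Sx ^ α * Sy ^ (1 - α)) ≤ 1 := by
      have hSxa : (0:ℝ) < Sx ^ α := Real.rpow_pos_of_pos hSxpos _
      have hSya : (0:ℝ) < Sy ^ (1 - α) := Real.rpow_pos_of_pos hSypos _
      have expand : Sz / (Sx ^ α * Sy ^ (1 - α))
          = ∑ ω, p ω * ((Real.exp (lam * X ω) / Sx) ^ α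
              * (Real.exp (lam * Y ω) / Sy) ^ (1 - α)) := by
        rw [hSz, Finset.sum_div]
        refine Finset.sum_congr rfl fun ω _ => ?_
        rw [Real.div_rpow (Real.exp_pos _).le hSxpos.le,
            Real.div_rpow (Real.exp_pos _).le hSypos.le]
        have : Real.exp (lam * (α * X ω + (1 - α) * Y ω))
            = Real.exp (lam * X ω) ^ α * Real.exp (lam * Y ω) ^ (1 - α) := by
          rw [← Real.exp_mul, ← Real.exp_mul, ← Real.exp_add]
          ring_nf
        rw [this]
        field_simp
      rw [expand]
      have hle : ∀ ω ∈ Finset.univ,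
          p ω * ((Real.exp (lam * X ω) / Sx) ^ α
              * (Real.exp (lam * Y ω) / Sy) ^ (1 - α))
          ≤ p ω * (α * (Real.exp (lam * X ω) / Sx)
              + (1 - α) * (Real.exp (lam * Y ω) / Sy)) := by
        intro ω _
        refine mul_le_mul_of_nonneg_left ?_ (hp.1 ω)
        exact Real.geom_mean_le_arith_mean2_weighted hα0 hα1'
          (div_nonneg (Real.exp_pos _).le hSxpos.le)
          (div_nonneg (Real.exp_pos _).le hSypos.le) (by ring)
      calc ∑ ω, p ω * ((Real.exp (lam * X ω) / Sx) ^ α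
              * (Real.exp (lam * Y ω) / Sy) ^ (1 - α))
          ≤ ∑ ω, p ω * (α * (Real.exp (lam * X ω) / Sx)
              + (1 - α) * (Real.exp (lam * Y ω) / Sy)) := Finset.sum_le_sum hle
        _ = α * (Sx / Sx) + (1 - α) * (Sy / Sy) := by
            rw [Finset.sum_congr rfl (fun ω _ => by ring :
              ∀ ω ∈ Finset.univ, p ω * (α * (Real.exp (lam * X ω) / Sx)
              + (1 - α) * (Real.exp (lam * Y ω) / Sy))
              = α * (p ω * Real.exp (lam * X ω)) / Sx
              + (1 - α) * (p ω * Real.exp (lam * Y ω)) / Sy)]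
            rw [Finset.sum_add_distrib, ← Finset.sum_div, ← Finset.sum_div,
              ← Finset.mul_sum, ← Finset.mul_sum]
            rw [hSx, hSy]
            field_simp
        _ = 1 := by
            rw [div_self hSxpos.ne', div_self hSypos.ne']; ring
    have hpos : (0:ℝ) < Sx ^ α * Sy ^ (1 - α) :=
      mul_pos (Real.rpow_pos_of_pos hSxpos _) (Real.rpow_pos_of_pos hSypos _)
    calc Sz = Sz / (Sx ^ α * Sy ^ (1 - α)) * (Sx ^ α * Sy ^ (1 - α)) := by
          field_simp
      _ ≤ 1 * (Sx ^ α * Sy ^ (1 - α)) := by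
          exact mul_le_mul_of_nonneg_right hmain hpos.le
      _ = Sx ^ α * Sy ^ (1 - α) := one_mul _
  have hlog : Real.log Sz ≤ α * Real.log Sx + (1 - α) * Real.log Sy := by
    calc Real.log Sz ≤ Real.log (Sx ^ α * Sy ^ (1 - α)) :=
          Real.log_le_log hSzpos key
      _ = α * Real.log Sx + (1 - α) * Real.log Sy := by
          rw [Real.log_mul (Real.rpow_pos_of_pos hSxpos _).ne'
            (Real.rpow_pos_of_pos hSypos _).ne',
            Real.log_rpow hSxpos, Real.log_rpow hSypos]
  unfold entRisk
  rw [← hSx, ← hSy, ← hSz]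
  have hinv : (1:ℝ)/lam < 0 := by
    exact div_neg_of_pos_of_neg one_pos hlam
  nlinarith [mul_le_mul_of_nonpos_left hlog hinv.le]
end
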